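/- arXiv:2308.02859 — 5 statements merged into one kernel-verified Lean document; each statement's English description precedes it below -/
import Mathlib

section
/- If N is a minor of a matroid M, then every circuit-cocircuit intersection of N is also a circuit-cocircuit intersection of M. -/
open Set

namespace Matroid

variable {α : Type*}

/-- A circuit: a minimal dependent set. -/
def IsCircuit' (M : Matroid α) (C : Set α) : Prop :=
  C ⊆ M.E ∧ ¬ M.Indep C ∧ ∀ D, D ⊂ C → M.Indep D

/-- A cocircuit: a circuit of the dual matroid. -/
def IsCocircuit' (M : Matroid α) (C : Set α) : Prop :=
  M✶.IsCircuit' C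

/-- A circuit-cocircuit intersection (CCI). -/
def IsCCI (M : Matroid α) (X : Set α) : Prop :=
  ∃ C K, M.IsCircuit' C ∧ M.IsCocircuit' K ∧ X = C ∩ K

/-- A hyperplane: a maximal proper flat. -/
def IsHyperplane (M : Matroid α) (H : Set α) : Prop :=
  M.IsFlat H ∧ H ≠ M.E ∧ ∀ F, M.IsFlat F → H ⊂ F → F = M.E

/-- The rank of a set: the largest size of an independent subset. -/
noncomputable def rk (M : Matroid α) (A : Set α) : ℕ :=
  sSup {n | ∃ I, I ⊆ A ∧ M.Indep I ∧ I.ncard = n}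

/-- The rank of a matroid. -/
noncomputable def rank (M : Matroid α) : ℕ := M.rk M.E

/-- Deletion of a set from a matroid. -/
def del (M : Matroid α) (D : Set α) : Matroid α := M.restrict (M.E \ D)

/-- Contraction of a set in a matroid. -/
def con (M : Matroid α) (C : Set α) : Matroid α := (M✶.restrict (M.E \ C))✶

/-- `N` is a minor of `M` if it is obtained by a contraction followed by a deletion. -/
def IsMinor' (N M : Matroid α) : Prop := ∃ C D, N = (M.con C).del D

end Matroid

open Matroid

namespace Matroid

variable {α : Type*} {M : Matroid α} {B I J J₁ J₂ X K₁ K₂ R C T : Set α} {e : α}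

lemma IsBasis.closure_eq_closure' (h : M.IsBasis I X) : M.closure I = M.closure X :=
  (M.closure_subset_closure h.subset).antisymm
    (closure_subset_closure_of_subset_closure h.subset_closure)

/-- Exchange lemma: an independent set outside `X` compatible with one basis of `X`
is compatible with every basis of `X`. -/
lemma basis_exch (hJ₁ : M.IsBasis J₁ X) (hJ₂ : M.IsBasis J₂ X)
    (hI : M.Indep (I ∪ J₁)) (hdj : Disjoint I X) : M.Indep (I ∪ J₂) := by
  have h1 : M.IsBasis (I ∪ J₁) (I ∪ X) := by
    refine hI.isBasis_of_subset_of_subset_closure (union_subset_union_right _ hJ₁.subset)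
      (union_subset ?_ ?_)
    · exact subset_union_left.trans (M.subset_closure _ hI.subset_ground)
    · exact hJ₁.subset_closure.trans (M.closure_subset_closure subset_union_right)
  obtain ⟨K, hK, hJ₂K, hKsub⟩ := hJ₂.indep.exists_isBasis_subset_union_isBasis
    (hJ₂.subset.trans subset_union_right) h1
  have hKX : K ∩ X = J₂ :=
    (hJ₂.eq_of_subset_indep (hK.indep.inter_right X)
      (subset_inter hJ₂K hJ₂.subset) inter_subset_right).symm
  have hKIJ₂ : K ⊆ I ∪ J₂ := by
    intro x hx
    rcases hKsub hx with h | h | h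
    · exact Or.inr h
    · exact Or.inl h
    · exact Or.inr (hKX ▸ ⟨hx, hJ₁.subset h⟩)
  have hIK : I ⊆ K := by
    intro x hxI
    by_contra hxK
    have hxcl : x ∈ M.closure K := hK.subset_closure (Or.inl hxI)
    have hKeq : K = (K \ X) ∪ J₂ := by
      rw [← hKX, diff_union_inter]
    have hcl : M.closure K = M.closure ((K \ X) ∪ J₁) := by
      conv_lhs => rw [hKeq]
      rw [← closure_union_closure_right_eq, hJ₂.closure_eq_closure',
        ← hJ₁.closure_eq_closure', closure_union_closure_right_eq]
    have hsub : (K \ X) ∪ J₁ ⊆ I ∪ J₁ :=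
      union_subset_union_left _
        (fun y hy => (hKIJ₂ hy.1).resolve_right (fun h => hy.2 (hJ₂.subset h)))
    have hind : M.Indep (insert x ((K \ X) ∪ J₁)) :=
      hI.subset (insert_subset (Or.inl hxI) hsub)
    have hxnot : x ∉ (K \ X) ∪ J₁ := by
      rintro (⟨hk, -⟩ | h)
      · exact hxK hk
      · exact hdj.ne_of_mem hxI (hJ₁.subset h) rfl
    have hdep : M.Dep (insert x ((K \ X) ∪ J₁)) := by
      rw [(hI.subset hsub).insert_dep_iff]
      exact ⟨hcl ▸ hxcl, hxnot⟩
    exact hdep.not_indep hind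
  have hEq : I ∪ J₂ = K := (union_subset hIK hJ₂K).antisymm hKIJ₂
  exact hEq ▸ hK.indep

lemma mem_closure_inter (hI : M.Indep I) (h1 : K₁ ⊆ I) (h2 : K₂ ⊆ I) (heI : e ∉ I)
    (he1 : e ∈ M.closure K₁) (he2 : e ∈ M.closure K₂) : e ∈ M.closure (K₁ ∩ K₂) := by
  by_contra hcon
  have heE : e ∈ M.E := mem_ground_of_mem_closure he1
  have hK₁ : M.Indep K₁ := hI.subset h1
  have hins : M.Indep (insert e (K₁ ∩ K₂)) := by
    rw [(hI.subset (inter_subset_left.trans h1)).insert_indep_iff_of_notMem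
      (fun h => heI (h1 h.1))]
    exact ⟨heE, hcon⟩
  have hb1 : M.IsBasis K₁ (insert e K₁) :=
    hK₁.isBasis_of_subset_of_subset_closure (subset_insert _ _)
      (insert_subset he1 (M.subset_closure _ hK₁.subset_ground))
  obtain ⟨B, hB, hsubB⟩ := hins.subset_isBasis_of_subset (insert_subset_insert inter_subset_left)
    (insert_subset heE hK₁.subset_ground)
  have hdj : Disjoint (K₂ \ K₁) (insert e K₁) := by
    refine disjoint_left.2 ?_
    rintro y ⟨hy2, hy1⟩ (rfl | h)
    · exact heI (h2 hy2)
    · exact hy1 h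
  have hind : M.Indep ((K₂ \ K₁) ∪ K₁) := hI.subset (union_subset (diff_subset.trans h2) h1)
  have hBig := basis_exch hb1 hB hind hdj
  have hsub : insert e K₂ ⊆ (K₂ \ K₁) ∪ B := by
    rintro x (rfl | hx)
    · exact Or.inr (hsubB (mem_insert _ _))
    · by_cases hx1 : x ∈ K₁
      · exact Or.inr (hsubB (mem_insert_of_mem _ ⟨hx1, hx⟩))
      · exact Or.inl ⟨hx, hx1⟩
  have hdep : M.Dep (insert e K₂) := by
    rw [(hI.subset h2).insert_dep_iff]
    exact ⟨he2, fun h => heI (h2 h)⟩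
  exact hdep.not_indep (hBig.subset hsub)

lemma mem_closure_sInter (hI : M.Indep I) {Ks : Set (Set α)} (hne : Ks.Nonempty)
    (hKs : ∀ K ∈ Ks, K ⊆ I) (he : ∀ K ∈ Ks, e ∈ M.closure K) : e ∈ M.closure (⋂₀ Ks) := by
  obtain ⟨K₀, hK₀⟩ := hne
  have heE : e ∈ M.E := mem_ground_of_mem_closure (he K₀ hK₀)
  have hAI : ⋂₀ Ks ⊆ I := (sInter_subset_of_mem hK₀).trans (hKs K₀ hK₀)
  by_cases heI : e ∈ I
  · have hmem : ∀ K ∈ Ks, e ∈ K := by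
      intro K hK
      by_contra heK
      have hd : M.Dep (insert e K) := ((hI.subset (hKs K hK)).insert_dep_iff).2 ⟨he K hK, heK⟩
      exact hd.not_indep (hI.subset (insert_subset heI (hKs K hK)))
    exact M.mem_closure_of_mem (by simpa [mem_sInter] using hmem)
      (hAI.trans hI.subset_ground)
  · by_contra hcon
    have hiA : M.Indep (insert e (⋂₀ Ks)) := by
      rw [(hI.subset hAI).insert_indep_iff_of_notMem (fun h => heI (hAI h))]
      exact ⟨heE, hcon⟩
    obtain ⟨B, hB, hsubB⟩ := hiA.subset_isBasis_of_subset (insert_subset_insert hAI)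
      (insert_subset heE hI.subset_ground)
    have heB : e ∈ B := hsubB (mem_insert _ _)
    set B' := B \ {e} with hB'def
    have hB'I : B' ⊆ I := by
      rintro x ⟨hxB, hxe⟩
      rcases hB.subset hxB with h | h
      · exact absurd h hxe
      · exact h
    have hB'ind : M.Indep B' := hB.indep.subset diff_subset
    have hBeq : insert e B' = B := by
      rw [hB'def, insert_diff_singleton, insert_eq_of_mem heB]
    have heclB' : e ∉ M.closure B' := by
      intro h
      have hd : M.Dep (insert e B') := (hB'ind.insert_dep_iff).2 ⟨h, fun hh => hh.2 rfl⟩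
      exact hd.not_indep (hBeq ▸ hB.indep)
    by_cases hIcl : I ⊆ M.closure B'
    · exact heclB'
        ((closure_subset_closure_of_subset_closure ((hKs K₀ hK₀).trans hIcl)) (he K₀ hK₀))
    · rw [not_subset] at hIcl
      obtain ⟨x, hxI, hxcl⟩ := hIcl
      have hxB : x ∉ B := by
        intro h
        exact hxcl (M.mem_closure_of_mem ⟨h, fun hh => heI (hh ▸ hxI)⟩ hB'ind.subset_ground)
      have hxclB : x ∈ M.closure B := hB.subset_closure (mem_insert_of_mem _ hxI)
      have hexch : e ∈ M.closure (insert x B') := by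
        by_contra hec
        have hxB' : M.Indep (insert x B') := by
          rw [hB'ind.insert_indep_iff_of_notMem
            (fun h => hxcl (M.mem_closure_of_mem h hB'ind.subset_ground))]
          exact ⟨hI.subset_ground hxI, hxcl⟩
        have hins2 : M.Indep (insert e (insert x B')) := by
          rw [hxB'.insert_indep_iff_of_notMem ?_]
          · exact ⟨heE, hec⟩
          · rintro (rfl | h)
            · exact heI hxI
            · exact heclB' (M.mem_closure_of_mem h hB'ind.subset_ground)
        have hd : M.Dep (insert x B) := (hB.indep.insert_dep_iff).2 ⟨hxclB, hxB⟩
        refine hd.not_indep (hins2.subset ?_)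
        rw [← hBeq, insert_comm]
      have hxA : x ∈ ⋂₀ Ks := by
        rw [mem_sInter]
        intro K hK
        by_contra hxK
        have hKG := mem_closure_inter hI (hKs K hK) (insert_subset hxI hB'I) heI
          (he K hK) hexch
        have hsub2 : K ∩ insert x B' ⊆ B' := by
          rintro y ⟨hyK, rfl | hy⟩
          · exact absurd hyK hxK
          · exact hy
        exact heclB' ((M.closure_subset_closure hsub2) hKG)
      exact hxB (hsubB (mem_insert_of_mem _ hxA))

lemma con_eq (M : Matroid α) (T : Set α) : M.con T = (M✶.restrict (M.E \ T))✶ := rfl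

lemma con_ground (M : Matroid α) (T : Set α) : (M.con T).E = M.E \ T := rfl

lemma con_base_iff {B : Set α} :
    (M.con T).IsBase B ↔ ∃ B₀, M.IsBase B₀ ∧ M.IsBasis (B₀ ∩ (T ∩ M.E)) (T ∩ M.E) ∧ B = B₀ \ T := by
  have hT'E : T ∩ M.E ⊆ M.E := inter_subset_right
  have hcompl : M.E \ (T ∩ M.E) = M.E \ T := diff_inter_self_eq_diff
  rw [con_eq, dual_isBase_iff']
  simp only [restrict_ground_eq]
  constructor
  · rintro ⟨hb, hBsub⟩
    rw [isBase_restrict_iff', isBasis'_iff_isBasis (show M.E \ T ⊆ M✶.E from diff_subset)] at hb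
    obtain ⟨B', hB', hEq⟩ := hb.exists_isBase
    have hB₀ : M.IsBase (M.E \ B') := hB'.compl_isBase_of_dual
    refine ⟨M.E \ B', hB₀, ?_, ?_⟩
    · rw [hB₀.inter_isBasis_iff_compl_inter_isBasis_dual hT'E,
        diff_diff_cancel_left (show B' ⊆ M.E from hB'.subset_ground), hcompl, ← hEq]
      exact hb
    · have h2 : B = (M.E \ T) \ ((M.E \ T) \ B) := (diff_diff_cancel_left hBsub).symm
      rw [h2, hEq]
      ext x
      simp only [mem_diff, mem_inter_iff, not_and]
      tauto
  · rintro ⟨B₀, hB₀, hbasis, rfl⟩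
    rw [hB₀.inter_isBasis_iff_compl_inter_isBasis_dual hT'E, hcompl] at hbasis
    constructor
    · rw [isBase_restrict_iff', isBasis'_iff_isBasis (show M.E \ T ⊆ M✶.E from diff_subset)]
      have h2 : (M.E \ T) \ (B₀ \ T) = (M.E \ B₀) ∩ (M.E \ T) := by
        ext x
        simp only [mem_diff, mem_inter_iff]
        tauto
      rw [h2]
      exact hbasis
    · exact fun x hx => ⟨hB₀.subset_ground hx.1, hx.2⟩

lemma con_indep_iff {I : Set α} (hJ : M.IsBasis J (T ∩ M.E)) :
    (M.con T).Indep I ↔ I ⊆ M.E \ T ∧ M.Indep (I ∪ J) := by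
  constructor
  · intro h
    obtain ⟨B, hB, hIB⟩ := indep_iff.1 h
    obtain ⟨B₀, hB₀, hbasis, rfl⟩ := con_base_iff.1 hB
    have hIsub : I ⊆ M.E \ T :=
      hIB.trans (fun x hx => ⟨hB₀.subset_ground hx.1, hx.2⟩)
    refine ⟨hIsub, ?_⟩
    have hun : M.Indep (I ∪ (B₀ ∩ (T ∩ M.E))) :=
      hB₀.indep.subset (union_subset (hIB.trans diff_subset) inter_subset_left)
    have hdj : Disjoint I (T ∩ M.E) :=
      disjoint_left.2 (fun x hx hx' => (hIsub hx).2 hx'.1)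
    exact basis_exch hbasis hJ hun hdj
  · rintro ⟨hIsub, hind⟩
    obtain ⟨B₀, hB₀, hsubB₀⟩ := hind.exists_isBase_superset
    have hJB : J = B₀ ∩ (T ∩ M.E) :=
      hJ.eq_of_subset_indep (hB₀.indep.inter_right _)
        (subset_inter (subset_union_right.trans hsubB₀) hJ.subset) inter_subset_right
    refine indep_iff.2 ⟨B₀ \ T, con_base_iff.2 ⟨B₀, hB₀, by rw [← hJB]; exact hJ, rfl⟩, ?_⟩
    exact fun x hx => ⟨hsubB₀ (Or.inl hx), (hIsub hx).2⟩

lemma restrict_circuit (hR : R ⊆ M.E) (h : (M ↾ R).IsCircuit' C) : M.IsCircuit' C := by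
  obtain ⟨hCsub, hCdep, hmin⟩ := h
  have hCR : C ⊆ R := hCsub
  exact ⟨hCR.trans hR, fun hind => hCdep (restrict_indep_iff.2 ⟨hind, hCR⟩),
    fun D hD => (restrict_indep_iff.1 (hmin D hD)).1⟩

lemma con_circuit_lift (h : (M.con T).IsCircuit' C) :
    ∃ C', M.IsCircuit' C' ∧ C ⊆ C' ∧ C' ⊆ C ∪ T := by
  obtain ⟨hCsub, hCdep, hmin⟩ := h
  have hCsub' : C ⊆ M.E \ T := hCsub
  obtain ⟨J, hJ⟩ := M.exists_isBasis (T ∩ M.E) inter_subset_right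
  have hJE : J ⊆ M.E := hJ.subset.trans inter_subset_right
  have hJT : J ⊆ T := hJ.subset.trans inter_subset_left
  have hCne : C.Nonempty := by
    rw [nonempty_iff_ne_empty]
    rintro rfl
    exact hCdep (M.con T).empty_indep
  obtain ⟨e, heC⟩ := hCne
  have heT : e ∉ T := (hCsub' heC).2
  have heJ : e ∉ J := fun h => heT (hJT h)
  have hamb : M.Indep ((C \ {e}) ∪ J) :=
    ((con_indep_iff hJ).1 (hmin (C \ {e}) (diff_singleton_ssubset.2 heC))).2
  have hCdep' : ¬ M.Indep (C ∪ J) := by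
    intro hind
    exact hCdep ((con_indep_iff hJ).2 ⟨hCsub', hind⟩)
  set 𝒥 : Set (Set α) := {J' | J' ⊆ J ∧ ¬ M.Indep (C ∪ J')} with h𝒥
  set J₀ := ⋂₀ 𝒥 with hJ₀def
  have hJmem : J ∈ 𝒥 := ⟨subset_rfl, hCdep'⟩
  have hJ₀J : J₀ ⊆ J := sInter_subset_of_mem hJmem
  have key : ∀ J' ⊆ J, (¬ M.Indep (C ∪ J') ↔ e ∈ M.closure ((C \ {e}) ∪ J')) := by
    intro J' hJ'
    have hind' : M.Indep ((C \ {e}) ∪ J') := hamb.subset (union_subset_union_right _ hJ')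
    have henot : e ∉ (C \ {e}) ∪ J' := by
      rintro (⟨-, h⟩ | h)
      · exact h rfl
      · exact heJ (hJ' h)
    have hins : insert e ((C \ {e}) ∪ J') = C ∪ J' := by
      rw [← insert_union, insert_diff_singleton, insert_eq_of_mem heC]
    constructor
    · intro hdep
      rw [hind'.mem_closure_iff_of_notMem henot, hins]
      exact dep_of_not_indep hdep
        (union_subset (hCsub'.trans diff_subset) (hJ'.trans hJE))
    · intro hcl hind2
      have hd := (hind'.insert_dep_iff).2 ⟨hcl, henot⟩
      rw [hins] at hd
      exact hd.not_indep hind2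
  have hecl : e ∈ M.closure ((C \ {e}) ∪ J₀) := by
    have hsInter : (C \ {e}) ∪ J₀ = ⋂₀ {S | ∃ J' ∈ 𝒥, S = (C \ {e}) ∪ J'} := by
      ext x
      simp only [hJ₀def, mem_union, mem_sInter, mem_setOf_eq, forall_exists_index, and_imp]
      constructor
      · rintro (hx | hx) S J' hJ' rfl
        · exact Or.inl hx
        · exact Or.inr (hx J' hJ')
      · intro hx
        by_cases hxC : x ∈ C \ {e}
        · exact Or.inl hxC
        · refine Or.inr ?_
          intro J' hJ'
          exact (hx _ J' hJ' rfl).resolve_left hxC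
    rw [hsInter]
    refine mem_closure_sInter hamb ⟨_, ⟨J, hJmem, rfl⟩⟩ ?_ ?_
    · rintro S ⟨J', hJ', rfl⟩
      exact union_subset_union_right _ hJ'.1
    · rintro S ⟨J', hJ', rfl⟩
      exact (key J' hJ'.1).1 hJ'.2
  have hC'dep : ¬ M.Indep (C ∪ J₀) := (key J₀ hJ₀J).2 hecl
  refine ⟨C ∪ J₀, ⟨union_subset (hCsub'.trans diff_subset) (hJ₀J.trans hJE), hC'dep, ?_⟩,
    subset_union_left, union_subset_union_right _ (hJ₀J.trans hJT)⟩
  intro D hD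
  by_cases hCD : C ⊆ D
  · have hDeq : D = C ∪ (D ∩ J₀) := by
      ext x
      constructor
      · intro hx
        rcases hD.subset hx with h | h
        · exact Or.inl h
        · exact Or.inr ⟨hx, h⟩
      · rintro (h | h)
        · exact hCD h
        · exact h.1
    by_contra hnind
    have hmemJ : (D ∩ J₀) ∈ 𝒥 :=
      ⟨inter_subset_right.trans hJ₀J, by rw [← hDeq]; exact hnind⟩
    have hsub : J₀ ⊆ D ∩ J₀ := sInter_subset_of_mem hmemJ
    exact hD.not_subset (union_subset hCD (hsub.trans inter_subset_left))
  · have hDC : D ∩ C ⊂ C := by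
      refine (inter_subset_right).ssubset_of_ne (fun h => hCD ?_)
      intro x hx
      have : x ∈ D ∩ C := h.symm ▸ hx
      exact this.1
    have hind := ((con_indep_iff hJ).1 (hmin (D ∩ C) hDC)).2
    refine hind.subset ?_
    intro x hxD
    rcases hD.subset hxD with h | h
    · exact Or.inl ⟨hxD, h⟩
    · exact Or.inr (hJ₀J h)

end Matroid

theorem stmt_2 {α : Type*} (M N : Matroid α) (hNM : N.IsMinor' M)
    (X : Set α) (hX : N.IsCCI X) : M.IsCCI X := by
  obtain ⟨T, D₀, rfl⟩ := hNM
  obtain ⟨C, K, hC, hK, rfl⟩ := hX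
  have hC1 : (M.con T).IsCircuit' C := restrict_circuit diff_subset hC
  obtain ⟨C', hC', hCC', hC'sub⟩ := con_circuit_lift hC1
  have hdual : (((M.con T).del D₀))✶ = ((M✶.del T).con D₀) := rfl
  have hK1 : ((M✶.del T).con D₀).IsCircuit' K := hdual ▸ hK
  obtain ⟨K', hK', hKK', hK'sub⟩ := con_circuit_lift hK1
  have hK'circ : M✶.IsCircuit' K' := restrict_circuit diff_subset hK'
  refine ⟨C', K', hC', hK'circ, ?_⟩
  apply subset_antisymm
  · exact Set.inter_subset_inter hCC' hKK'
  · rintro x ⟨hxC', hxK'⟩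
    have hK'T : K' ⊆ M.E \ T := hK'.1
    have hxT : x ∉ T := (hK'T hxK').2
    have hxC : x ∈ C := (hC'sub hxC').resolve_right hxT
    have hCground : C ⊆ (M.E \ T) \ D₀ := hC.1
    have hxD₀ : x ∉ D₀ := (hCground hxC).2
    have hxK : x ∈ K := (hK'sub hxK').resolve_right hxD₀
    exact ⟨hxC, hxK⟩
end

section
/- Let N be a CCI-envelope of a CCI X of size k ≥ 4, Y = E(N)\X, and J ⊆ Y with |J| = k−3. Then the sets (closure(J ∪ {x}) ∩ X) for x ∈ X partition X into at least two blocks, and for each block X_i the set J ∪ X_i is a hyperplane of N. -/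
open Set

open Matroid

section Aux

variable {α : Type*} {M : Matroid α}

lemma aux_flat_closure (M : Matroid α) (X : Set α) : M.IsFlat (M.closure X) :=
  ⟨fun I W hIF hIW => by
     have h1 := hIF.closure_eq_closure
     have h2 := hIW.subset_closure
     rwa [h1, Matroid.closure_closure] at h2,
   M.closure_subset_ground X⟩

lemma aux_rank_eq (hfin : M.E.Finite) {B : Set α} (hB : M.IsBase B) :
    M.rank = B.ncard := by
  have hgreat : IsGreatest {n | ∃ I, I ⊆ M.E ∧ M.Indep I ∧ I.ncard = n} B.ncard := by
    constructor
    · exact ⟨B, hB.subset_ground, hB.indep, rfl⟩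
    · rintro n ⟨I, hIE, hI, rfl⟩
      obtain ⟨B', hB', hIB'⟩ := hI.exists_isBase_superset
      have hB'fin : B'.Finite := hfin.subset hB'.subset_ground
      calc I.ncard ≤ B'.ncard := Set.ncard_le_ncard hIB' hB'fin
        _ = B.ncard := hB'.ncard_eq_ncard_of_isBase hB
  exact hgreat.csSup_eq

end Aux

theorem stmt_5 {α : Type*} (N : Matroid α) (k : ℕ) (hk : 4 ≤ k)
    (hE : N.E.ncard = 2 * k - 2) (hr : N.rank = k - 1) (hr' : N✶.rank = k - 1)
    (X : Set α) (hXcard : X.ncard = k)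
    (hXc : N.IsCircuit' X) (hXcc : N.IsCocircuit' X)
    (J : Set α) (hJ : J ⊆ N.E \ X) (hJcard : J.ncard = k - 3) :
    (∀ x ∈ X, x ∈ N.closure (J ∪ {x}) ∩ X) ∧
    (∀ x ∈ X, ∀ y ∈ X,
      N.closure (J ∪ {x}) ∩ X = N.closure (J ∪ {y}) ∩ X ∨
      Disjoint (N.closure (J ∪ {x}) ∩ X) (N.closure (J ∪ {y}) ∩ X)) ∧
    (∃ x ∈ X, ∃ y ∈ X, N.closure (J ∪ {x}) ∩ X ≠ N.closure (J ∪ {y}) ∩ X) ∧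
    (∀ x ∈ X, N.IsHyperplane (J ∪ (N.closure (J ∪ {x}) ∩ X))) := by
  classical
  -- ground set is finite
  have hfinE : N.E.Finite := by
    by_contra h
    rw [Set.Infinite.ncard h] at hE
    omega
  have hXE : X ⊆ N.E := hXc.1
  have hfinX : X.Finite := hfinE.subset hXE
  set Y : Set α := N.E \ X with hYdef
  have hYcard : Y.ncard = k - 2 := by
    rw [hYdef, Set.ncard_diff hXE (hfinE.subset hXE), hE, hXcard]
    omega
  have hYfin : Y.Finite := hfinE.subset diff_subset
  -- all bases have size k - 1
  have hbase : ∀ B, N.IsBase B → B.ncard = k - 1 := by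
    intro B hB
    have := aux_rank_eq hfinE hB
    omega
  have hindep_le : ∀ I, N.Indep I → I.ncard ≤ k - 1 := by
    intro I hI
    obtain ⟨B, hB, hIB⟩ := hI.exists_isBase_superset
    calc I.ncard ≤ B.ncard := Set.ncard_le_ncard hIB (hfinE.subset hB.subset_ground)
      _ = k - 1 := hbase B hB
  have hbase_of : ∀ I, N.Indep I → I.ncard = k - 1 → N.IsBase I := by
    intro I hI hIcard
    obtain ⟨B, hB, hIB⟩ := hI.exists_isBase_superset
    have : I = B := Set.eq_of_subset_of_ncard_le hIB
      (by rw [hbase B hB, hIcard]) (hfinE.subset hB.subset_ground)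
    rwa [this]
  -- for each x ∈ X, insert x Y is a base
  have hYx : ∀ x ∈ X, N.IsBase (insert x Y) := by
    intro x hx
    have hss : X \ {x} ⊂ X := sdiff_singleton_ssubset.2 hx
    have hcoind : N✶.Indep (X \ {x}) := hXcc.2.2 _ hss
    rw [Matroid.dual_indep_iff_exists'] at hcoind
    obtain ⟨-, B, hB, hdisj⟩ := hcoind
    have hBsub : B ⊆ insert x Y := by
      intro e he
      have heE : e ∈ N.E := hB.subset_ground he
      by_cases heX : e ∈ X
      · have : e ∉ X \ {x} := fun h => hdisj.ne_of_mem h he rfl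
        simp only [mem_diff, mem_singleton_iff, not_and, not_not] at this
        exact Or.inl (this heX) |>.elim (fun h => h ▸ mem_insert _ _) id
      · exact mem_insert_of_mem _ ⟨heE, heX⟩
    have hxY : x ∉ Y := fun h => h.2 hx
    have hcard : (insert x Y).ncard = k - 1 := by
      rw [Set.ncard_insert_of_notMem hxY hYfin, hYcard]; omega
    have : B = insert x Y := Set.eq_of_subset_of_ncard_le hBsub
      (by rw [hcard, hbase B hB]) (hYfin.insert x)
    rwa [← this]
  -- X is nonempty
  have hXne : X.Nonempty := Set.nonempty_of_ncard_ne_zero (by omega)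
  obtain ⟨x₀, hx₀⟩ := hXne
  have hYindep : N.Indep Y := ((hYx x₀ hx₀).indep).subset (subset_insert _ _)
  -- Y is a flat
  have hYflat : N.closure Y = Y := by
    refine subset_antisymm (fun e he => ?_) (N.subset_closure Y diff_subset)
    have heE : e ∈ N.E := N.closure_subset_ground Y he
    by_contra heY
    have heX : e ∈ X := by
      by_contra heX
      exact heY ⟨heE, heX⟩
    have hdep : N.Dep (insert e Y) := hYindep.insert_dep_iff.2 ⟨he, heY⟩
    exact hdep.not_indep (hYx e heX).indep
  have hJY : J ⊆ Y := hJ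
  have hJindep : N.Indep J := hYindep.subset hJY
  have hJfin : J.Finite := hYfin.subset hJY
  have hclJY : N.closure J ⊆ Y := by
    rw [← hYflat]; exact N.closure_subset_closure hJY
  have hmemX : ∀ z ∈ X, z ∉ N.closure J := fun z hz h => (hclJY h).2 hz
  have hnotY : ∀ z ∈ X, z ∉ Y := fun z hz h => h.2 hz
  have hXJ : ∀ z ∈ X, z ∉ J := fun z hz h => hnotY z hz (hJY h)
  -- closure J ∩ Y \ J is empty, i.e. elements of Y \ J are not in closure J
  have hYclJ : ∀ e ∈ Y, e ∉ J → e ∉ N.closure J := by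
    intro e he heJ h
    have hdep : N.Dep (insert e J) := hJindep.insert_dep_iff.2 ⟨h, heJ⟩
    exact hdep.not_indep (hYindep.subset (insert_subset he hJY))
  -- independence of J ∪ {x}
  have hxJindep : ∀ x ∈ X, N.Indep (insert x J) := by
    intro x hx
    exact (hYx x hx).indep.subset (insert_subset_insert hJY)
  have hxJcard : ∀ x ∈ X, (insert x J).ncard = k - 2 := by
    intro x hx
    rw [Set.ncard_insert_of_notMem (hXJ x hx) hJfin, hJcard]; omega
  -- rewrite unions as inserts
  have hux : ∀ x : α, J ∪ {x} = insert x J := fun x => union_singleton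
  -- exchange lemma
  have hexch : ∀ x ∈ X, ∀ z ∈ X, z ∈ N.closure (J ∪ {x}) →
      N.closure (J ∪ {x}) = N.closure (J ∪ {z}) := by
    intro x hx z hz hzmem
    rw [hux] at hzmem ⊢
    rw [hux]
    have hzJ : z ∉ N.closure J := hmemX z hz
    have hxmem : x ∈ N.closure (insert z J) :=
      (Matroid.closure_exchange ⟨hzmem, hzJ⟩).1
    apply subset_antisymm
    · apply N.closure_subset_closure_of_subset_closure
      exact insert_subset hxmem ((subset_insert _ _).trans
        (N.subset_closure _ (insert_subset (hXE hz) (hJY.trans diff_subset))))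
    · apply N.closure_subset_closure_of_subset_closure
      exact insert_subset hzmem ((subset_insert _ _).trans
        (N.subset_closure _ (insert_subset (hXE hx) (hJY.trans diff_subset))))
  -- membership of seeds in closures
  have hself : ∀ x ∈ X, x ∈ N.closure (J ∪ {x}) := by
    intro x hx
    rw [hux]
    exact N.subset_closure _ (insert_subset (hXE hx) (hJY.trans diff_subset))
      (mem_insert _ _)
  -- spanning contradiction helper: closure (J ∪ {x}) ≠ N.E
  have hne_ground : ∀ x ∈ X, N.closure (J ∪ {x}) ≠ N.E := by
    intro x hx h
    have hb : N.IsBase (insert x J) :=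
      (hxJindep x hx).isBase_of_ground_subset_closure (by rw [← hux, h])
    have := hbase _ hb
    have := hxJcard x hx
    omega
  -- hyperplane property of the closures
  have hhyp : ∀ x ∈ X, N.IsHyperplane (N.closure (J ∪ {x})) := by
    intro x hx
    refine ⟨aux_flat_closure N _, hne_ground x hx, ?_⟩
    intro F hF hssub
    obtain ⟨e, heF, heH⟩ := exists_of_ssubset hssub
    have heE : e ∈ N.E := hF.subset_ground heF
    have hsubH : insert x J ⊆ N.closure (J ∪ {x}) := by
      rw [hux]
      exact N.subset_closure _ (insert_subset (hXE hx) (hJY.trans diff_subset))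
    have heI : e ∉ insert x J := fun h => heH (hsubH h)
    have hind : N.Indep (insert e (insert x J)) := by
      rw [(hxJindep x hx).insert_indep_iff_of_notMem heI]
      exact ⟨heE, by rwa [← hux]⟩
    have hcard : (insert e (insert x J)).ncard = k - 1 := by
      rw [Set.ncard_insert_of_notMem heI ((hJfin.insert x)), hxJcard x hx]; omega
    have hb : N.IsBase (insert e (insert x J)) := hbase_of _ hind hcard
    have hsubF : insert e (insert x J) ⊆ F := insert_subset heF (hsubH.trans hssub.subset)
    have : N.E ⊆ F := by
      rw [← hb.closure_eq]
      calc N.closure (insert e (insert x J)) ⊆ N.closure F := N.closure_subset_closure hsubF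
        _ = F := hF.closure
    exact subset_antisymm hF.subset_ground this
  -- the closure of J ∪ {x} meets Y exactly in J
  have hHeq : ∀ x ∈ X, J ∪ (N.closure (J ∪ {x}) ∩ X) = N.closure (J ∪ {x}) := by
    intro x hx
    apply subset_antisymm
    · apply union_subset
      · rw [hux]
        exact (subset_insert _ _).trans
          (N.subset_closure _ (insert_subset (hXE hx) (hJY.trans diff_subset)))
      · exact inter_subset_left
    · intro e he
      have heE : e ∈ N.E := N.closure_subset_ground _ he
      by_cases heX : e ∈ X
      · exact Or.inr ⟨he, heX⟩
      · have heY : e ∈ Y := ⟨heE, heX⟩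
        left
        by_contra heJ
        have heclJ : e ∉ N.closure J := hYclJ e heY heJ
        rw [hux] at he
        have hxmem : x ∈ N.closure (insert e J) :=
          (Matroid.closure_exchange ⟨he, heclJ⟩).1
        have : x ∈ Y := by
          rw [← hYflat]
          exact (N.closure_subset_closure (insert_subset heY hJY)) hxmem
        exact hnotY x hx this
  refine ⟨?_, ?_, ?_, ?_⟩
  · intro x hx
    exact ⟨hself x hx, hx⟩
  · intro x hx y hy
    rcases Set.disjoint_or_nonempty_inter (N.closure (J ∪ {x}) ∩ X) (N.closure (J ∪ {y}) ∩ X)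
      with hd | ⟨z, hz⟩
    · exact Or.inr hd
    · left
      obtain ⟨⟨hz1, hzX⟩, hz2, -⟩ := hz
      rw [hexch x hx z hzX hz1, hexch y hy z hzX hz2]
  · by_contra h
    push_neg at h
    have hXsub : X ⊆ N.closure (J ∪ {x₀}) := by
      intro y hy
      have : y ∈ N.closure (J ∪ {y}) ∩ X := ⟨hself y hy, hy⟩
      rw [h y hy x₀ hx₀] at this
      exact this.1
    -- X \ {x₀} is a base, so closure (J ∪ {x₀}) = N.E, contradiction
    have hind : N.Indep (X \ {x₀}) := hXc.2.2 _ (sdiff_singleton_ssubset.2 hx₀)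
    have hcard : (X \ {x₀}).ncard = k - 1 := by
      rw [Set.ncard_sdiff_singleton_of_mem hx₀, hXcard]
    have hb : N.IsBase (X \ {x₀}) := hbase_of _ hind hcard
    apply hne_ground x₀ hx₀
    apply subset_antisymm (N.closure_subset_ground _)
    rw [← hb.closure_eq]
    calc N.closure (X \ {x₀}) ⊆ N.closure (N.closure (J ∪ {x₀})) :=
          N.closure_subset_closure (diff_subset.trans hXsub)
      _ = N.closure (J ∪ {x₀}) := N.closure_closure _
  · intro x hx
    rw [hHeq x hx]
    exact hhyp x hx
end

section
/- Let N be a CCI-envelope of a CCI X of size k ≥ 4 with Y = E(N)\X, and let (J; X₁, X₂) be a hyperplane-partition of X (so J ⊆ Y, |J| = k−3, and J ∪ X₁, J ∪ X₂ are hyperplanes with X = X₁ ⊔ X₂). Suppose (J'; X₁', ..., X_m') is another hyperplane-partition, and {x₁} = X₁ ∩ X₁', {x₂} = X₂ ∩ X₂' are singleton blocks of the induced common refinement such that {x₁, x₂} is not contained in any X_j'. Then (J ∩ J') ∪ {x₁, x₂} is a hyperplane of N, and X\{x₁, x₂} is a CCI of N of size k−2. -/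
open Set

namespace Matroid

variable {α : Type*}

variable {M : Matroid α}

/-- The closure of any set is a flat. -/
lemma closure_flat' (M : Matroid α) (X : Set α) : M.IsFlat (M.closure X) := by
  rw [closure_def]
  have hne : Nonempty {F // F ∈ {F | M.IsFlat F ∧ X ∩ M.E ⊆ F}} :=
    ⟨⟨M.E, M.ground_isFlat, inter_subset_right⟩⟩
  rw [sInter_eq_iInter]
  exact IsFlat.iInter fun F ↦ F.2.1

/-- The intersection of two flats is a flat. -/
lemma IsFlat.inter' {F₁ F₂ : Set α} (h₁ : M.IsFlat F₁) (h₂ : M.IsFlat F₂) : M.IsFlat (F₁ ∩ F₂) := by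
  have h : F₁ ∩ F₂ = ⋂ (b : Bool), bif b then F₁ else F₂ := by
    simp [Set.inter_eq_iInter]
  rw [h]
  exact IsFlat.iInter (by rintro (_ | _) <;> simpa)

lemma flat_of_closure_eq {F : Set α} (h : M.closure F = F) : M.IsFlat F :=
  h ▸ M.closure_flat' F

/-- Adding a point outside a hyperplane spans the matroid. -/
lemma IsHyperplane.closure_insert_eq {H : Set α} (hH : M.IsHyperplane H) {e : α}
    (he : e ∈ M.E) (heH : e ∉ H) : M.closure (insert e H) = M.E := by
  obtain ⟨hf, -, hmax⟩ := hH
  refine hmax _ (M.closure_flat' _) ⟨?_, fun hcon ↦ heH ?_⟩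
  · exact (subset_insert _ _).trans
      (M.subset_closure _ (insert_subset he hf.subset_ground))
  · exact hcon (M.subset_closure _ (insert_subset he hf.subset_ground) (mem_insert _ _))

end Matroid

open Matroid

theorem stmt_6 {α : Type*} (N : Matroid α) (k : ℕ) (hk : 4 ≤ k)
    (hE : N.E.ncard = 2 * k - 2) (hr : N.rank = k - 1) (hr' : N✶.rank = k - 1)
    (X : Set α) (hXcard : X.ncard = k)
    (hXc : N.IsCircuit' X) (hXcc : N.IsCocircuit' X)
    -- the hyperplane-partition (J; X₁, X₂)
    (J X₁ X₂ : Set α) (hJ : J ⊆ N.E \ X) (hJcard : J.ncard = k - 3)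
    (hX₁₂ : X₁ ∪ X₂ = X) (hdisj : Disjoint X₁ X₂)
    (hH₁ : N.IsHyperplane (J ∪ X₁)) (hH₂ : N.IsHyperplane (J ∪ X₂))
    -- the hyperplane-partition (J'; X'_1, ..., X'_m)
    (m : ℕ) (J' : Set α) (X' : Fin m → Set α)
    (hJ' : J' ⊆ N.E \ X) (hJ'card : J'.ncard = k - 3)
    (hX'ne : ∀ j, (X' j).Nonempty)
    (hX'disj : ∀ i j, i ≠ j → Disjoint (X' i) (X' j))
    (hX'union : (⋃ j, X' j) = X)
    (hH' : ∀ j, N.IsHyperplane (J' ∪ X' j))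
    -- the singleton blocks of the induced refinement
    (x₁ x₂ : α) (j₁ j₂ : Fin m)
    (hx₁ : X₁ ∩ X' j₁ = {x₁}) (hx₂ : X₂ ∩ X' j₂ = {x₂})
    (hnot : ∀ j, ¬ ({x₁, x₂} : Set α) ⊆ X' j) :
    N.IsHyperplane ((J ∩ J') ∪ {x₁, x₂}) ∧
      N.IsCCI (X \ {x₁, x₂}) ∧ (X \ {x₁, x₂}).ncard = k - 2 := by
  obtain ⟨hXE, hXdep, hXssub⟩ := hXc
  have hEfin : N.E.Finite := by
    by_contra h
    rw [Set.Infinite.ncard h] at hE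
    omega
  have hXfin : X.Finite := hEfin.subset hXE
  have hYfin : (N.E \ X).Finite := hEfin.diff (t := X)
  have hYcard : (N.E \ X).ncard = k - 2 := by
    rw [Set.ncard_diff hXE hXfin, hE, hXcard]; omega
  -- rank facts
  have hbddS : BddAbove {n | ∃ I, I ⊆ N.E ∧ N.Indep I ∧ I.ncard = n} := by
    refine ⟨N.E.ncard, ?_⟩
    rintro n ⟨I, hIE, -, rfl⟩
    exact Set.ncard_le_ncard hIE hEfin
  have hub : ∀ I, N.Indep I → I.ncard ≤ k - 1 := by
    intro I hI
    have : I.ncard ≤ sSup {n | ∃ I, I ⊆ N.E ∧ N.Indep I ∧ I.ncard = n} :=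
      le_csSup hbddS ⟨I, hI.subset_ground, hI, rfl⟩
    rwa [show sSup {n | ∃ I, I ⊆ N.E ∧ N.Indep I ∧ I.ncard = n} = k - 1 from hr] at this
  have hSup_mem : ∃ I, I ⊆ N.E ∧ N.Indep I ∧ I.ncard = k - 1 := by
    have h0 : (0 : ℕ) ∈ {n | ∃ I, I ⊆ N.E ∧ N.Indep I ∧ I.ncard = n} :=
      ⟨∅, empty_subset _, N.empty_indep, by simp⟩
    have := Nat.sSup_mem ⟨0, h0⟩ hbddS
    rwa [show sSup {n | ∃ I, I ⊆ N.E ∧ N.Indep I ∧ I.ncard = n} = k - 1 from hr] at this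
  have hbase_card : ∀ B, N.IsBase B → B.ncard = k - 1 := by
    obtain ⟨I₀, hI₀E, hI₀, hI₀card⟩ := hSup_mem
    obtain ⟨B₀, hB₀, hsub⟩ := hI₀.exists_isBase_superset
    have hB₀card : B₀.ncard = k - 1 := by
      have h1 := hub B₀ hB₀.indep
      have h2 : I₀.ncard ≤ B₀.ncard :=
        Set.ncard_le_ncard hsub (hEfin.subset hB₀.subset_ground)
      omega
    exact fun B hB ↦ (hB.ncard_eq_ncard_of_isBase hB₀).trans hB₀card
  have hbase_of_card : ∀ I, N.Indep I → I.ncard = k - 1 → N.IsBase I := by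
    intro I hI hcard
    obtain ⟨B, hB, hIB⟩ := hI.exists_isBase_superset
    have hIB' : I = B :=
      Set.eq_of_subset_of_ncard_le hIB (by rw [hbase_card B hB, hcard])
        (hEfin.subset hB.subset_ground)
    rwa [hIB']
  -- independent subsets of proper flats have at most k-2 elements
  have hmax : ∀ T G, N.Indep T → T ⊆ G → N.IsFlat G → G ≠ N.E → T.ncard ≤ k - 2 := by
    intro T G hT hTG hG hGne
    by_contra h
    push_neg at h
    have hTcard : T.ncard = k - 1 := by have := hub T hT; omega
    have hB := hbase_of_card T hT hTcard
    apply hGne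
    apply subset_antisymm hG.subset_ground
    rw [← hB.closure_eq]
    exact (N.closure_subset_closure hTG).trans hG.closure.subset
  -- card of a basis of a hyperplane is k-2
  have hyp_basis_card : ∀ H I, N.IsHyperplane H → N.IsBasis I H → I.ncard = k - 2 := by
    intro H I hH hI
    obtain ⟨e, heE, heH⟩ : ∃ e, e ∈ N.E ∧ e ∉ H :=
      (Set.exists_of_ssubset (hH.1.subset_ground.ssubset_of_ne hH.2.1)).imp
        (fun e he ↦ ⟨he.1, he.2⟩)
    have heI : e ∉ I := fun h ↦ heH (hI.subset h)
    have hecl : e ∉ N.closure I := by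
      rw [hI.closure_eq_closure, hH.1.closure]; exact heH
    have hins : N.Indep (insert e I) :=
      (hI.indep.insert_indep_iff_of_notMem heI).mpr ⟨heE, hecl⟩
    have hspan : N.closure (insert e I) = N.E := by
      have h1 : N.closure (insert e (N.closure I)) = N.closure (insert e I) :=
        N.closure_insert_closure_eq_closure_insert e I
      rw [hI.closure_eq_closure, hH.1.closure] at h1
      rw [← h1]
      exact hH.closure_insert_eq heE heH
    have hbase : N.IsBase (insert e I) :=
      hins.isBase_of_ground_subset_closure hspan.ge
    have hc := hbase_card _ hbase
    rw [Set.ncard_insert_of_notMem heI (hEfin.subset hI.indep.subset_ground)] at hc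
    omega
  -- closure of an independent set of size k-2 is a hyperplane
  have hyp_of_card : ∀ W, N.Indep W → W.ncard = k - 2 → N.IsHyperplane (N.closure W) := by
    intro W hW hWcard
    have hWfin : W.Finite := hEfin.subset hW.subset_ground
    refine ⟨N.closure_flat' W, ?_, ?_⟩
    · intro h
      have hbase : N.IsBase W := hW.isBase_of_ground_subset_closure h.ge
      have := hbase_card W hbase
      omega
    · intro F hF hss
      obtain ⟨e, heF, hecl⟩ := Set.exists_of_ssubset hss
      have heE : e ∈ N.E := hF.subset_ground heF
      have heW : e ∉ W := fun h ↦ hecl (N.subset_closure W hW.subset_ground h)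
      have hins : N.Indep (insert e W) :=
        (hW.insert_indep_iff_of_notMem heW).mpr ⟨heE, hecl⟩
      have hbase : N.IsBase (insert e W) := by
        apply hbase_of_card _ hins
        rw [Set.ncard_insert_of_notMem heW hWfin, hWcard]
        omega
      apply subset_antisymm hF.subset_ground
      rw [← hbase.closure_eq]
      refine (N.closure_subset_closure ?_).trans hF.closure.subset
      exact insert_subset heF (hss.subset.trans' ((N.subset_closure W hW.subset_ground)))
  -- the complement of X is a hyperplane
  obtain ⟨hXE', hXdep', hXind'⟩ := hXcc
  have hclY_ne : N.closure (N.E \ X) ≠ N.E := by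
    intro h
    exact hXdep' ((coindep_iff_closure_compl_eq_ground hXE).mpr h).indep
  have hspan_diff : ∀ e ∈ X, N.closure (insert e (N.E \ X)) = N.E := by
    intro e he
    have hssub : X \ {e} ⊂ X :=
      Set.sdiff_singleton_ssubset.mpr he
    have hco : N.Coindep (X \ {e}) := coindep_def.mpr (hXind' _ hssub)
    have hcl := hco.closure_compl
    have hset : N.E \ (X \ {e}) = insert e (N.E \ X) := by
      ext z
      simp only [mem_diff, mem_singleton_iff, mem_insert_iff, not_and, not_not]
      constructor
      · rintro ⟨hzE, hz⟩
        by_cases hzX : z ∈ X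
        · exact Or.inl (hz hzX)
        · exact Or.inr ⟨hzE, hzX⟩
      · rintro (rfl | ⟨hzE, hzX⟩)
        · exact ⟨hXE he, fun _ ↦ rfl⟩
        · exact ⟨hzE, fun h ↦ absurd h hzX⟩
    rwa [hset] at hcl
  have hYflat : N.IsFlat (N.E \ X) := by
    apply flat_of_closure_eq
    apply subset_antisymm _ (N.subset_closure _ diff_subset)
    intro e he
    by_contra heY
    have heE : e ∈ N.E := N.mem_ground_of_mem_closure he
    have heX : e ∈ X := by
      by_contra h
      exact heY ⟨heE, h⟩
    apply hclY_ne
    rw [← N.closure_insert_eq_of_mem_closure he]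
    exact hspan_diff e heX
  have hXne : X.Nonempty := Set.nonempty_of_ncard_ne_zero (by omega)
  have hYhyp : N.IsHyperplane (N.E \ X) := by
    refine ⟨hYflat, ?_, ?_⟩
    · intro h
      obtain ⟨x, hx⟩ := hXne
      have hx' : x ∈ N.E \ X := by rw [h]; exact hXE hx
      exact hx'.2 hx
    · intro F hF hss
      obtain ⟨e, heF, heY⟩ := Set.exists_of_ssubset hss
      have heE : e ∈ N.E := hF.subset_ground heF
      have heX : e ∈ X := by
        by_contra h; exact heY ⟨heE, h⟩
      apply subset_antisymm hF.subset_ground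
      rw [← hspan_diff e heX]
      exact (N.closure_subset_closure (insert_subset heF hss.subset)).trans hF.closure.subset
  -- complement of a hyperplane is a cocircuit
  have hyp_compl_cocirc : ∀ H, N.IsHyperplane H → N.IsCocircuit' (N.E \ H) := by
    intro H hH
    obtain ⟨hHf, hHne, hHmax⟩ := hH
    refine ⟨?_, ?_, ?_⟩
    · rw [dual_ground]; exact diff_subset
    · intro h
      have hco : N.Coindep (N.E \ H) := coindep_def.mpr h
      have := hco.closure_compl
      rw [Set.diff_diff_cancel_left hHf.subset_ground, hHf.closure] at this
      exact hHne this
    · intro D hD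
      have hDE : D ⊆ N.E := hD.subset.trans diff_subset
      have : N.closure (N.E \ D) = N.E := by
        obtain ⟨w, hwY, hwD⟩ := Set.exists_of_ssubset hD
        have hHsub : H ⊆ N.E \ D := fun z hz ↦
          ⟨hHf.subset_ground hz, fun hzD ↦ (hD.subset hzD).2 hz⟩
        apply hHmax _ (N.closure_flat' _)
        refine ⟨hHsub.trans (N.subset_closure _ diff_subset), fun hcon ↦ hwY.2 ?_⟩
        exact hcon (N.subset_closure _ diff_subset ⟨hwY.1, hwD⟩)
      exact ((coindep_iff_closure_compl_eq_ground hDE).mpr this).indep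
  -- basic memberships
  have hx₁mem : x₁ ∈ X₁ ∩ X' j₁ := hx₁ ▸ rfl
  have hx₂mem : x₂ ∈ X₂ ∩ X' j₂ := hx₂ ▸ rfl
  have hx₁X₁ : x₁ ∈ X₁ := hx₁mem.1
  have hx₂X₂ : x₂ ∈ X₂ := hx₂mem.1
  have hX₁X : X₁ ⊆ X := hX₁₂ ▸ subset_union_left
  have hX₂X : X₂ ⊆ X := hX₁₂ ▸ subset_union_right
  have hX'X : ∀ j, X' j ⊆ X := fun j ↦ hX'union ▸ subset_iUnion X' j
  have hx₁X : x₁ ∈ X := hX₁X hx₁X₁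
  have hx₂X : x₂ ∈ X := hX₂X hx₂X₂
  have hx₁x₂ : x₁ ≠ x₂ := hdisj.ne_of_mem hx₁X₁ hx₂X₂
  have hj₁j₂ : j₁ ≠ j₂ := by
    rintro rfl
    exact hnot j₁ (insert_subset hx₁mem.2 (singleton_subset_iff.mpr hx₂mem.2))
  have hx₂nj₁ : x₂ ∉ X' j₁ := fun h ↦ (hX'disj j₁ j₂ hj₁j₂).ne_of_mem h hx₂mem.2 rfl
  -- Y is independent
  have hYindep : N.Indep (N.E \ X) := by
    obtain ⟨I, hI⟩ := N.exists_isBasis (N.E \ X) diff_subset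
    have hIcard := hyp_basis_card _ _ hYhyp hI
    have : I = N.E \ X :=
      Set.eq_of_subset_of_ncard_le hI.subset (by rw [hYcard, hIcard]) hYfin
    exact this ▸ hI.indep
  have hJindep : N.Indep J := hYindep.subset hJ
  have hJ'indep : N.Indep J' := hYindep.subset hJ'
  have hJfin : J.Finite := hYfin.subset hJ
  have hJ'fin : J'.Finite := hYfin.subset hJ'
  have hJJfin : (J ∩ J').Finite := hJfin.subset inter_subset_left
  have hJJindep : N.Indep (J ∩ J') := hJindep.subset inter_subset_left
  have hie : (J ∪ J').ncard + (J ∩ J').ncard = J.ncard + J'.ncard :=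
    Set.ncard_union_add_ncard_inter J J' hJfin hJ'fin
  have hUle : (J ∪ J').ncard ≤ k - 2 := by
    rw [← hYcard]
    exact Set.ncard_le_ncard (union_subset hJ hJ') hYfin
  have hJJge : k - 4 ≤ (J ∩ J').ncard := by omega
  have hJJle : (J ∩ J').ncard ≤ k - 3 := by
    rw [← hJcard]
    exact Set.ncard_le_ncard inter_subset_left hJfin
  -- the intersections of the hyperplanes
  have hJX : ∀ z ∈ J, z ∉ X := fun z hz ↦ (hJ hz).2
  have hJ'X : ∀ z ∈ J', z ∉ X := fun z hz ↦ (hJ' hz).2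
  have hF₁eq : (J ∪ X₁) ∩ (J' ∪ X' j₁) = insert x₁ (J ∩ J') := by
    ext z
    simp only [mem_inter_iff, mem_union, mem_insert_iff]
    constructor
    · rintro ⟨hz1 | hz1, hz2 | hz2⟩
      · exact Or.inr ⟨hz1, hz2⟩
      · exact absurd (hX'X j₁ hz2) (hJX z hz1)
      · exact absurd (hX₁X hz1) (hJ'X z hz2)
      · exact Or.inl (by have : z ∈ X₁ ∩ X' j₁ := ⟨hz1, hz2⟩; rwa [hx₁] at this)
    · rintro (rfl | ⟨hz1, hz2⟩)
      · exact ⟨Or.inr hx₁X₁, Or.inr hx₁mem.2⟩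
      · exact ⟨Or.inl hz1, Or.inl hz2⟩
  have hF₂eq : (J ∪ X₂) ∩ (J' ∪ X' j₂) = insert x₂ (J ∩ J') := by
    ext z
    simp only [mem_inter_iff, mem_union, mem_insert_iff]
    constructor
    · rintro ⟨hz1 | hz1, hz2 | hz2⟩
      · exact Or.inr ⟨hz1, hz2⟩
      · exact absurd (hX'X j₂ hz2) (hJX z hz1)
      · exact absurd (hX₂X hz1) (hJ'X z hz2)
      · exact Or.inl (by have : z ∈ X₂ ∩ X' j₂ := ⟨hz1, hz2⟩; rwa [hx₂] at this)
    · rintro (rfl | ⟨hz1, hz2⟩)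
      · exact ⟨Or.inr hx₂X₂, Or.inr hx₂mem.2⟩
      · exact ⟨Or.inl hz1, Or.inl hz2⟩
  have hF₁flat : N.IsFlat (insert x₁ (J ∩ J')) := hF₁eq ▸ hH₁.1.inter' (hH' j₁).1
  have hF₂flat : N.IsFlat (insert x₂ (J ∩ J')) := hF₂eq ▸ hH₂.1.inter' (hH' j₂).1
  have hclJJ : N.closure (J ∩ J') ⊆ N.E \ X := by
    rw [← hYflat.closure]
    exact N.closure_subset_closure (inter_subset_left.trans hJ)
  have hx₁nJJ : x₁ ∉ J ∩ J' := fun h ↦ (hJ h.1).2 hx₁X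
  have hx₂nJJ : x₂ ∉ J ∩ J' := fun h ↦ (hJ h.1).2 hx₂X
  have hx₁ind : N.Indep (insert x₁ (J ∩ J')) :=
    (hJJindep.insert_indep_iff_of_notMem hx₁nJJ).mpr
      ⟨hXE hx₁X, fun h ↦ (hclJJ h).2 hx₁X⟩
  have hx₂nF₁ : x₂ ∉ insert x₁ (J ∩ J') := by
    simp only [mem_insert_iff, not_or]
    exact ⟨hx₁x₂.symm, hx₂nJJ⟩
  have hHind : N.Indep (insert x₂ (insert x₁ (J ∩ J'))) := by
    refine ((hx₁ind).insert_indep_iff_of_notMem hx₂nF₁).mpr ⟨hXE hx₂X, fun h ↦ ?_⟩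
    rw [hF₁flat.closure] at h
    exact hx₂nF₁ h
  -- (J ∩ J') has exactly k - 4 elements
  have hJJcard : (J ∩ J').ncard = k - 4 := by
    by_contra hne
    have hJJ3 : (J ∩ J').ncard = k - 3 := by omega
    have hJJeqJ : J ∩ J' = J :=
      Set.eq_of_subset_of_ncard_le inter_subset_left (by rw [hJcard, hJJ3]) hJfin
    have hF₁card : (insert x₁ (J ∩ J')).ncard = k - 2 := by
      rw [Set.ncard_insert_of_notMem hx₁nJJ hJJfin, hJJ3]; omega
    have hF₁hyp : N.IsHyperplane (insert x₁ (J ∩ J')) := by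
      have := hyp_of_card _ hx₁ind hF₁card
      rwa [hF₁flat.closure] at this
    have hF₁sub : insert x₁ (J ∩ J') ⊆ J ∪ X₁ := hF₁eq ▸ inter_subset_left
    have hF₁eqH₁ : insert x₁ (J ∩ J') = J ∪ X₁ := by
      by_contra hne'
      exact hH₁.2.1 (hF₁hyp.2.2 _ hH₁.1 (hF₁sub.ssubset_of_ne hne'))
    have hX₁sub : X₁ = {x₁} := by
      apply subset_antisymm _ (singleton_subset_iff.mpr hx₁X₁)
      intro z hz
      have : z ∈ insert x₁ (J ∩ J') := hF₁eqH₁ ▸ Or.inr hz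
      rcases this with rfl | hzJJ
      · rfl
      · exact absurd (hX₁X hz) ((hJ hzJJ.1).2)
    have hX₂eq : X₂ = X \ {x₁} := by
      ext z
      constructor
      · intro hz
        refine ⟨hX₂X hz, fun h ↦ ?_⟩
        rw [mem_singleton_iff] at h
        subst h
        exact hdisj.ne_of_mem hx₁X₁ hz rfl
      · rintro ⟨hzX, hzne⟩
        rcases (hX₁₂ ▸ hzX : z ∈ X₁ ∪ X₂) with h | h
        · rw [hX₁sub] at h; exact absurd h hzne
        · exact h
    have hX₂card : X₂.ncard = k - 1 := by
      rw [hX₂eq, Set.ncard_diff_singleton_of_mem hx₁X, hXcard]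
    have hX₂ssub : X₂ ⊂ X := by
      rw [hX₂eq]
      exact Set.sdiff_singleton_ssubset.mpr hx₁X
    have hX₂indep : N.Indep X₂ := hXssub _ hX₂ssub
    have := hmax X₂ (J ∪ X₂) hX₂indep subset_union_right hH₂.1 hH₂.2.1
    omega
  have hYeq : J ∪ J' = N.E \ X := by
    apply Set.eq_of_subset_of_ncard_le (union_subset hJ hJ') _ hYfin
    rw [hYcard]
    omega
  -- H := insert x₂ (insert x₁ (J ∩ J'))
  have hHcard : (insert x₂ (insert x₁ (J ∩ J'))).ncard = k - 2 := by
    rw [Set.ncard_insert_of_notMem hx₂nF₁ (hJJfin.insert x₁),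
      Set.ncard_insert_of_notMem hx₁nJJ hJJfin, hJJcard]
    omega
  have hGhyp : N.IsHyperplane (N.closure (insert x₂ (insert x₁ (J ∩ J')))) :=
    hyp_of_card _ hHind hHcard
  have hHsubG : insert x₂ (insert x₁ (J ∩ J')) ⊆
      N.closure (insert x₂ (insert x₁ (J ∩ J'))) :=
    N.subset_closure _ hHind.subset_ground
  have hGflat : N.IsFlat (N.closure (insert x₂ (insert x₁ (J ∩ J')))) := N.closure_flat' _
  have hGne : N.closure (insert x₂ (insert x₁ (J ∩ J'))) ≠ N.E := hGhyp.2.1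
  -- the sandwich lemma
  have hSAND : ∀ W F' G, N.Indep W → W.ncard = k - 3 → N.IsFlat W → N.IsFlat F' →
      W ⊆ F' → F' ⊆ G → N.IsFlat G → G ≠ N.E → ∀ w ∈ G, w ∉ F' → F' = W := by
    intro W F' G hW hWcard hWflat hF' hWF' hF'G hG hGne' w hw hwF'
    obtain ⟨I', hI', hWI'⟩ := hW.subset_isBasis_of_subset hWF' hF'.subset_ground
    have hclI' : N.closure I' = F' := by rw [hI'.closure_eq_closure, hF'.closure]
    by_cases hIW : I' = W
    · rw [← hF'.closure, ← hI'.closure_eq_closure, hIW, hWflat.closure]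
    · exfalso
      obtain ⟨u, huI', huW⟩ := Set.exists_of_ssubset (hWI'.ssubset_of_ne (Ne.symm hIW))
      have hI'fin : I'.Finite := hEfin.subset hI'.indep.subset_ground
      have hI'card : k - 2 ≤ I'.ncard := by
        have hsub : insert u W ⊆ I' := insert_subset huI' hWI'
        have := Set.ncard_le_ncard hsub hI'fin
        rw [Set.ncard_insert_of_notMem huW (hI'fin.subset hWI')] at this
        omega
      have hwI' : w ∉ I' := fun h ↦ hwF' (hI'.subset h)
      have hwcl : w ∉ N.closure I' := hclI' ▸ hwF'
      have hins : N.Indep (insert w I') :=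
        (hI'.indep.insert_indep_iff_of_notMem hwI').mpr ⟨hG.subset_ground hw, hwcl⟩
      have hle := hmax _ G hins
        (insert_subset hw (hI'.subset.trans hF'G)) hG hGne'
      rw [Set.ncard_insert_of_notMem hwI' hI'fin] at hle
      omega
  have hF₁card : (insert x₁ (J ∩ J')).ncard = k - 3 := by
    rw [Set.ncard_insert_of_notMem hx₁nJJ hJJfin, hJJcard]; omega
  have hx₂ind : N.Indep (insert x₂ (J ∩ J')) :=
    hHind.subset (insert_subset_insert (subset_insert _ _))
  have hF₂card : (insert x₂ (J ∩ J')).ncard = k - 3 := by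
    rw [Set.ncard_insert_of_notMem hx₂nJJ hJJfin, hJJcard]; omega
  set G := N.closure (insert x₂ (insert x₁ (J ∩ J'))) with hGdef
  have hx₁G : x₁ ∈ G := hHsubG (Or.inr (mem_insert _ _))
  have hx₂G : x₂ ∈ G := hHsubG (mem_insert _ _)
  have hJJsubH : J ∩ J' ⊆ insert x₂ (insert x₁ (J ∩ J')) :=
    (subset_insert _ _).trans (subset_insert _ _)
  have hF₁subG : insert x₁ (J ∩ J') ⊆ G := insert_subset hx₁G (hJJsubH.trans hHsubG)
  have hF₂subG : insert x₂ (J ∩ J') ⊆ G := insert_subset hx₂G (hJJsubH.trans hHsubG)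
  -- the three sandwich applications
  have eqA : G ∩ (J ∪ X₁) = insert x₁ (J ∩ J') := by
    refine hSAND (insert x₁ (J ∩ J')) _ G hx₁ind hF₁card hF₁flat
      (hGflat.inter' hH₁.1) ?_ inter_subset_left hGflat hGne x₂ hx₂G ?_
    · exact subset_inter hF₁subG (insert_subset (Or.inr hx₁X₁)
        (inter_subset_left.trans subset_union_left))
    · rintro ⟨-, (h | h)⟩
      · exact (hJ h).2 hx₂X
      · exact hdisj.ne_of_mem h hx₂X₂ rfl
  have eqB : G ∩ (J' ∪ X' j₁) = insert x₁ (J ∩ J') := by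
    refine hSAND (insert x₁ (J ∩ J')) _ G hx₁ind hF₁card hF₁flat
      (hGflat.inter' (hH' j₁).1) ?_ inter_subset_left hGflat hGne x₂ hx₂G ?_
    · exact subset_inter hF₁subG (insert_subset (Or.inr hx₁mem.2)
        (inter_subset_right.trans subset_union_left))
    · rintro ⟨-, (h | h)⟩
      · exact (hJ' h).2 hx₂X
      · exact hx₂nj₁ h
  have eqC : G ∩ (J ∪ X₂) = insert x₂ (J ∩ J') := by
    refine hSAND (insert x₂ (J ∩ J')) _ G hx₂ind hF₂card hF₂flat
      (hGflat.inter' hH₂.1) ?_ inter_subset_left hGflat hGne x₁ hx₁G ?_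
    · exact subset_inter hF₂subG (insert_subset (Or.inr hx₂X₂)
        (inter_subset_left.trans subset_union_left))
    · rintro ⟨-, (h | h)⟩
      · exact (hJ h).2 hx₁X
      · exact hdisj.ne_of_mem hx₁X₁ h rfl
  -- G = H
  have hGeq : G = insert x₂ (insert x₁ (J ∩ J')) := by
    apply subset_antisymm _ hHsubG
    intro e heG
    have heE : e ∈ N.E := N.closure_subset_ground _ heG
    by_cases heX : e ∈ X
    · rcases (hX₁₂ ▸ heX : e ∈ X₁ ∪ X₂) with h1 | h2
      · have : e ∈ insert x₁ (J ∩ J') := eqA ▸ ⟨heG, Or.inr h1⟩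
        rcases this with rfl | h
        · exact Or.inr (mem_insert _ _)
        · exact absurd heX (hJ h.1).2
      · have : e ∈ insert x₂ (J ∩ J') := eqC ▸ ⟨heG, Or.inr h2⟩
        rcases this with rfl | h
        · exact mem_insert _ _
        · exact absurd heX (hJ h.1).2
    · have heY : e ∈ J ∪ J' := hYeq ▸ ⟨heE, heX⟩
      rcases heY with h1 | h2
      · have : e ∈ insert x₁ (J ∩ J') := eqA ▸ ⟨heG, Or.inl h1⟩
        rcases this with rfl | h
        · exact absurd hx₁X heX
        · exact Or.inr (Or.inr h)
      · have : e ∈ insert x₁ (J ∩ J') := eqB ▸ ⟨heG, Or.inl h2⟩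
        rcases this with rfl | h
        · exact absurd hx₁X heX
        · exact Or.inr (Or.inr h)
  have hHset : (J ∩ J') ∪ {x₁, x₂} = insert x₂ (insert x₁ (J ∩ J')) := by
    ext z
    simp only [mem_union, mem_insert_iff, mem_singleton_iff]
    tauto
  have hHhyp : N.IsHyperplane ((J ∩ J') ∪ {x₁, x₂}) := by
    rw [hHset, ← hGeq]
    exact hGhyp
  refine ⟨hHhyp, ?_, ?_⟩
  · refine ⟨X, N.E \ ((J ∩ J') ∪ {x₁, x₂}), ⟨hXE, hXdep, hXssub⟩,
      hyp_compl_cocirc _ hHhyp, ?_⟩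
    ext z
    constructor
    · rintro ⟨hzX, hz⟩
      refine ⟨hzX, hXE hzX, fun h ↦ ?_⟩
      rcases h with h | h
      · exact (hJ h.1).2 hzX
      · exact hz h
    · rintro ⟨hzX, -, hz⟩
      exact ⟨hzX, fun h ↦ hz (Or.inr h)⟩
  · have hpair : ({x₁, x₂} : Set α) ⊆ X :=
      insert_subset hx₁X (singleton_subset_iff.mpr hx₂X)
    rw [Set.ncard_diff hpair, hXcard, Set.ncard_pair hx₁x₂]
end

section
/- Let N be a CCI-envelope of a CCI X of size k ≥ 4, and let (J; X₁, X₂), (J'; X₁', X₂') be hyperplane-partitions with J ≠ J'. If Z₁, Z₂ are two blocks of the induced common refinement of X such that Z₁ ∪ Z₂ is contained in no X_i and no X_j', then (J ∩ J') ∪ Z₁ ∪ Z₂ is a hyperplane of N. -/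
open Set

namespace Matroid

variable {α : Type*}

namespace CCIAux

lemma flat_closure_aux (M : Matroid α) (X : Set α) : M.IsFlat (M.closure X) := by
  rw [closure_def, sInter_eq_iInter]
  have hne : Nonempty {F // F ∈ {F | M.IsFlat F ∧ X ∩ M.E ⊆ F}} :=
    ⟨⟨M.E, M.ground_isFlat, inter_subset_right⟩⟩
  exact IsFlat.iInter fun F ↦ F.2.1

lemma indep_ncard_le_rank_aux (M : Matroid α) (hfin : M.E.Finite) {I : Set α} (hI : M.Indep I) :
    I.ncard ≤ M.rank := by
  unfold Matroid.rank Matroid.rk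
  apply le_csSup
  · exact ⟨M.E.ncard, fun n ⟨I', h1, _, h3⟩ ↦ h3 ▸ ncard_le_ncard h1 hfin⟩
  · exact ⟨I, hI.subset_ground, hI, rfl⟩

lemma isHyperplane_of_forall_aux (M : Matroid α) {H : Set α}
    (hcl : M.closure H = H) (hne : H ≠ M.E)
    (hmax : ∀ e ∈ M.E \ H, M.closure (insert e H) = M.E) : M.IsHyperplane H := by
  have hHE : H ⊆ M.E := hcl ▸ M.closure_subset_ground H
  refine ⟨hcl ▸ flat_closure_aux M H, hne, fun F hF hHF ↦ ?_⟩
  obtain ⟨e, heF, heH⟩ := exists_of_ssubset hHF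
  have heE : e ∈ M.E := hF.subset_ground heF
  have h1 : M.closure (insert e H) ⊆ F := by
    rw [← hF.closure]
    exact M.closure_subset_closure (insert_subset heF hHF.subset)
  exact subset_antisymm hF.subset_ground ((hmax e ⟨heE, heH⟩) ▸ h1)

lemma hyp_not_spanning_aux (M : Matroid α) {H : Set α} (hH : M.IsHyperplane H) :
    ¬ M.Spanning H := fun h ↦ hH.2.1 (by rw [← hH.1.closure]; exact h.closure_eq)

lemma cci_key (N : Matroid α) (k : ℕ) (hk : 4 ≤ k)
    (hE : N.E.ncard = 2 * k - 2) (hr' : N✶.rank = k - 1)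
    (X : Set α) (hXcard : X.ncard = k)
    (hXc : N.IsCircuit' X) (hXcc : N.IsCocircuit' X)
    (J X₁ X₂ : Set α) (hJ : J ⊆ N.E \ X) (hJcard : J.ncard = k - 3)
    (hX₁₂ : X₁ ∪ X₂ = X) (hdisj : Disjoint X₁ X₂)
    (hH₁ : N.IsHyperplane (J ∪ X₁)) (hH₂ : N.IsHyperplane (J ∪ X₂))
    (J' X₁' X₂' : Set α) (hJ' : J' ⊆ N.E \ X) (hJ'card : J'.ncard = k - 3)
    (hX₁₂' : X₁' ∪ X₂' = X) (hdisj' : Disjoint X₁' X₂')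
    (hH₁' : N.IsHyperplane (J' ∪ X₁')) (hH₂' : N.IsHyperplane (J' ∪ X₂'))
    (hJJ' : J ≠ J')
    (hz1 : (X₁ ∩ X₁').Nonempty) (hz2 : (X₂ ∩ X₂').Nonempty) :
    N.IsHyperplane ((J ∩ J') ∪ (X₁ ∩ X₁') ∪ (X₂ ∩ X₂')) := by
  obtain ⟨z₁, hz₁⟩ := hz1
  obtain ⟨z₂, hz₂⟩ := hz2
  have hXE : X ⊆ N.E := hXc.1
  have hEfin : N.E.Finite := by
    by_contra h
    rw [Set.Infinite.ncard h] at hE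
    omega
  have hXfin : X.Finite := hEfin.subset hXE
  set Y : Set α := N.E \ X with hYdef
  have hYfin : Y.Finite := hEfin.diff
  have hYcard : Y.ncard = k - 2 := by
    rw [hYdef, ncard_diff hXE hXfin, hE, hXcard]
    omega
  -- the elements y, y'
  have hJY : J ⊆ Y := hJ
  have hJ'Y : J' ⊆ Y := hJ'
  have hJfin : J.Finite := hYfin.subset hJY
  have hJ'fin : J'.Finite := hYfin.subset hJ'Y
  obtain ⟨y, hy⟩ : ∃ y, Y \ J = {y} := by
    rw [← ncard_eq_one, ncard_diff hJY hJfin, hYcard, hJcard]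
    omega
  obtain ⟨y', hy'⟩ : ∃ y', Y \ J' = {y'} := by
    rw [← ncard_eq_one, ncard_diff hJ'Y hJ'fin, hYcard, hJ'card]
    omega
  have hJeq : J = Y \ {y} := by rw [← hy, diff_diff_cancel_left hJY]
  have hJ'eq : J' = Y \ {y'} := by rw [← hy', diff_diff_cancel_left hJ'Y]
  have hyY : y ∈ Y := by
    have h : y ∈ Y \ J := hy ▸ rfl
    exact h.1
  have hy'Y : y' ∈ Y := by
    have h : y' ∈ Y \ J' := hy' ▸ rfl
    exact h.1
  have hyy' : y ≠ y' := by
    rintro rfl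
    exact hJJ' (hJeq.trans hJ'eq.symm)
  have hyX : y ∉ X := hyY.2
  have hy'X : y' ∉ X := hy'Y.2
  have hyE : y ∈ N.E := hyY.1
  have hy'E : y' ∈ N.E := hy'Y.1
  -- membership facts
  have hJX : ∀ a ∈ J, a ∉ X := fun a ha ↦ (hJY ha).2
  have hJ'X : ∀ a ∈ J', a ∉ X := fun a ha ↦ (hJ'Y ha).2
  have hX₁X : X₁ ⊆ X := hX₁₂ ▸ subset_union_left
  have hX₂X : X₂ ⊆ X := hX₁₂ ▸ subset_union_right
  have hX₁'X : X₁' ⊆ X := hX₁₂' ▸ subset_union_left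
  have hX₂'X : X₂' ⊆ X := hX₁₂' ▸ subset_union_right
  have hz₁X : z₁ ∈ X := hX₁X hz₁.1
  have hz₂X : z₂ ∈ X := hX₂X hz₂.1
  have hz₁E : z₁ ∈ N.E := hXE hz₁X
  have hz₂E : z₂ ∈ N.E := hXE hz₂X
  -- J ∩ J' facts
  have hJJ'sub : J ∩ J' ⊆ Y := fun a ha ↦ hJY ha.1
  have hJJ'fin : (J ∩ J').Finite := hYfin.subset hJJ'sub
  have hJJ'card : (J ∩ J').ncard = k - 4 := by
    rw [hJeq, hJ'eq, diff_inter_diff, singleton_union,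
      ncard_diff (insert_subset hyY (singleton_subset_iff.mpr hy'Y)) (toFinite _),
      hYcard, ncard_pair hyy']
    omega
  have hinsJ : insert y (J ∩ J') = J' := by
    rw [hJeq, hJ'eq, diff_inter_diff]
    ext a
    simp only [mem_insert_iff, mem_diff, mem_union, mem_singleton_iff]
    constructor
    · rintro (rfl | ⟨h1, h2⟩)
      · exact ⟨hyY, hyy'⟩
      · exact ⟨h1, fun h ↦ h2 (Or.inr h)⟩
    · rintro ⟨h1, h2⟩
      by_cases h : a = y
      · exact Or.inl h
      · exact Or.inr ⟨h1, by tauto⟩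
  have hinsJ' : insert y' (J ∩ J') = J := by
    rw [hJeq, hJ'eq, diff_inter_diff]
    ext a
    simp only [mem_insert_iff, mem_diff, mem_union, mem_singleton_iff]
    constructor
    · rintro (rfl | ⟨h1, h2⟩)
      · exact ⟨hy'Y, fun h ↦ hyy' h.symm⟩
      · exact ⟨h1, fun h ↦ h2 (Or.inl h)⟩
    · rintro ⟨h1, h2⟩
      by_cases h : a = y'
      · exact Or.inl h
      · exact Or.inr ⟨h1, by tauto⟩
  -- bases
  have hbase : ∀ x ∈ X, N.IsBase (Y ∪ {x}) := by
    intro x hx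
    have hssub : X \ {x} ⊂ X := ⟨diff_subset, fun h ↦ (h hx).2 rfl⟩
    have hind : N✶.Indep (X \ {x}) := hXcc.2.2 _ hssub
    have hcard : (X \ {x}).ncard = k - 1 := by
      rw [ncard_diff (singleton_subset_iff.mpr hx) (finite_singleton x), hXcard,
        ncard_singleton]
    obtain ⟨B, hB, hsub⟩ := hind.exists_isBase_superset
    have hBcard : B.ncard ≤ k - 1 := by
      rw [← hr']
      exact indep_ncard_le_rank_aux N✶ (by simpa using hEfin) hB.indep
    have hBeq : X \ {x} = B := eq_of_subset_of_ncard_le hsub (by omega)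
      (hEfin.subset (by simpa using hB.subset_ground))
    have hcB : N.IsBase (N.E \ (X \ {x})) := (hBeq ▸ hB).compl_isBase_of_dual
    have heq : N.E \ (X \ {x}) = Y ∪ {x} := by
      rw [diff_diff_right, hYdef, inter_eq_self_of_subset_right
        (singleton_subset_iff.mpr (hXE hx))]
    rwa [heq] at hcB
  have hbasecard : ∀ B, N.IsBase B → B.ncard = k - 1 := by
    intro B hB
    rw [hB.ncard_eq_ncard_of_isBase (hbase z₁ hz₁X)]
    rw [union_singleton, ncard_insert_of_notMem (fun h ↦ h.2 hz₁X) hYfin, hYcard]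
    omega
  have hbc : ∀ I : Set α, N.Indep I → I.ncard = k - 1 → N.IsBase I := by
    intro I hI hIc
    obtain ⟨B, hB, hIB⟩ := hI.exists_isBase_superset
    have hIB' : I = B := eq_of_subset_of_ncard_le hIB (by rw [hbasecard B hB, hIc])
      (hEfin.subset hB.subset_ground)
    exact hIB' ▸ hB
  -- element of J \ J'
  obtain ⟨j, hjJ, hjJ'⟩ : ∃ j, j ∈ J ∧ j ∉ J' := by
    by_contra h
    push_neg at h
    exact hJJ' (eq_of_subset_of_ncard_le h (by rw [hJcard, hJ'card]) hJ'fin)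
  -- Claim D: the closure of (J∩J') + one point of U∩U' is (J∩J') ∪ (U∩U')
  have claimD : ∀ (U U' : Set α) (z : α), U ⊆ X → U' ⊆ X → z ∈ U ∩ U' →
      N.IsHyperplane (J ∪ U) → N.IsHyperplane (J' ∪ U') →
      N.closure (insert z (J ∩ J')) = (J ∩ J') ∪ (U ∩ U') := by
    intro U U' z hUX hU'X hz hPU hPU'
    have hzX : z ∈ X := hUX hz.1
    have hzE : z ∈ N.E := hXE hzX
    set A : Set α := insert z (J ∩ J') with hA
    have hAind : N.Indep A := (hbase z hzX).indep.subset (by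
      rw [union_singleton]
      exact insert_subset_insert hJJ'sub)
    have hAE : A ⊆ N.E := hAind.subset_ground
    have hAcard : A.ncard = k - 3 := by
      rw [hA, ncard_insert_of_notMem (fun h ↦ hJX z h.1 hzX) hJJ'fin, hJJ'card]
      omega
    have hAsub1 : A ⊆ J ∪ U := insert_subset (Or.inr hz.1)
      (inter_subset_left.trans subset_union_left)
    have hAsub2 : A ⊆ J' ∪ U' := insert_subset (Or.inr hz.2)
      (inter_subset_right.trans subset_union_left)
    have hiden : (J ∪ U) ∩ (J' ∪ U') = (J ∩ J') ∪ (U ∩ U') := by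
      ext a
      simp only [mem_inter_iff, mem_union]
      constructor
      · rintro ⟨h1 | h1, h2 | h2⟩
        · exact Or.inl ⟨h1, h2⟩
        · exact absurd (hU'X h2) (hJX a h1)
        · exact absurd (hUX h1) (hJ'X a h2)
        · exact Or.inr ⟨h1, h2⟩
      · rintro (⟨h1, h2⟩ | ⟨h1, h2⟩)
        · exact ⟨Or.inl h1, Or.inl h2⟩
        · exact ⟨Or.inr h1, Or.inr h2⟩
    have hup : ∀ {S : Set α}, S ⊆ (J ∩ J') ∪ (U ∩ U') →
        N.closure S ⊆ (J ∩ J') ∪ (U ∩ U') := by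
      intro S hS
      rw [← hiden]
      apply subset_inter
      · rw [← hPU.1.closure]
        exact N.closure_subset_closure (hS.trans (by rw [← hiden]; exact inter_subset_left))
      · rw [← hPU'.1.closure]
        exact N.closure_subset_closure (hS.trans (by
          rw [← hiden]; exact inter_subset_right))
    have hAsub : A ⊆ (J ∩ J') ∪ (U ∩ U') := insert_subset (Or.inr hz) subset_union_left
    apply subset_antisymm (hup hAsub)
    rintro a (haJJ | haUU')
    · exact N.subset_closure A hAE (Or.inr haJJ)
    · -- a ∈ U ∩ U' : show a ∈ closure A
      by_contra hv
      have hIind : N.Indep (insert a A) := by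
        rw [insert_indep_iff]
        exact ⟨hAind, fun _ ↦ ⟨hXE (hUX haUU'.1), hv⟩⟩
      have haA : a ∉ A := fun h ↦ hv (N.subset_closure A hAE h)
      have hIcard : (insert a A).ncard = k - 2 := by
        rw [ncard_insert_of_notMem haA (hEfin.subset hAE), hAcard]
        omega
      have hIsub : insert a A ⊆ J ∪ U := insert_subset (Or.inr haUU'.1) hAsub1
      by_cases hcover : J ∪ U ⊆ N.closure (insert a A)
      · have hclsub : N.closure (insert a A) ⊆ (J ∩ J') ∪ (U ∩ U') :=
          hup (insert_subset (Or.inr haUU') hAsub)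
        have hjmem : j ∈ (J ∩ J') ∪ (U ∩ U') := hclsub (hcover (Or.inl hjJ))
        rcases hjmem with h | h
        · exact hjJ' h.2
        · exact hJX j hjJ (hUX h.1)
      · rw [not_subset] at hcover
        obtain ⟨t, htJU, htcl⟩ := hcover
        have htE : t ∈ N.E := hPU.1.subset_ground htJU
        have htind : N.Indep (insert t (insert a A)) := by
          rw [insert_indep_iff]
          exact ⟨hIind, fun _ ↦ ⟨htE, htcl⟩⟩
        have htA : t ∉ insert a A := fun h ↦
          htcl (N.subset_closure _ hIind.subset_ground h)
        have htcard : (insert t (insert a A)).ncard = k - 1 := by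
          rw [ncard_insert_of_notMem htA (hEfin.subset hIind.subset_ground), hIcard]
          omega
        have hsp : N.Spanning (J ∪ U) := ((hbc _ htind htcard).spanning).superset
          (insert_subset htJU hIsub) (hPU.1.subset_ground)
        exact (hyp_not_spanning_aux N hPU) hsp
  have hclA₁ : N.closure (insert z₁ (J ∩ J')) = (J ∩ J') ∪ (X₁ ∩ X₁') :=
    claimD X₁ X₁' z₁ hX₁X hX₁'X hz₁ hH₁ hH₁'
  have hclA₂ : N.closure (insert z₂ (J ∩ J')) = (J ∩ J') ∪ (X₂ ∩ X₂') :=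
    claimD X₂ X₂' z₂ hX₂X hX₂'X hz₂ hH₂ hH₂'
  set G : Set α := insert z₂ (insert z₁ (J ∩ J')) with hG
  set H : Set α := (J ∩ J') ∪ (X₁ ∩ X₁') ∪ (X₂ ∩ X₂') with hHdef
  have hHE : H ⊆ N.E := by
    rw [hHdef]
    refine union_subset (union_subset ?_ ?_) ?_
    · exact hJJ'sub.trans diff_subset
    · exact (inter_subset_left.trans hX₁X).trans hXE
    · exact (inter_subset_left.trans hX₂X).trans hXE
  have hGH : G ⊆ H := by
    rw [hG, hHdef]
    exact insert_subset (Or.inr hz₂) (insert_subset (Or.inl (Or.inr hz₁))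
      (subset_union_left.trans subset_union_left))
  have hGE : G ⊆ N.E := hGH.trans hHE
  have hz₂z₁ : z₂ ∉ insert z₁ (J ∩ J') := by
    rintro (rfl | h)
    · exact absurd hz₂.1 (disjoint_left.mp hdisj hz₁.1)
    · exact hJX z₂ h.1 hz₂X
  have hGind : N.Indep G := by
    rw [hG, insert_indep_iff]
    refine ⟨(hbase z₁ hz₁X).indep.subset (by
      rw [union_singleton]; exact insert_subset_insert hJJ'sub), fun _ ↦ ⟨hz₂E, ?_⟩⟩
    rw [hclA₁]
    rintro (h | h)
    · exact hJX z₂ h.1 hz₂X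
    · exact (disjoint_left.mp hdisj h.1) hz₂.1
  have hGcard : G.ncard = k - 2 := by
    rw [hG, ncard_insert_of_notMem hz₂z₁ ((hJJ'fin.insert z₁)),
      ncard_insert_of_notMem (fun h ↦ hJX z₁ h.1 hz₁X) hJJ'fin, hJJ'card]
    omega
  -- the key independence fact
  have hkey : ∀ u ∈ N.E, u ∉ H → N.Indep (insert u G) := by
    intro u huE huH
    rw [hHdef] at huH
    have hu1 : u ∉ J ∩ J' := fun h ↦ huH (Or.inl (Or.inl h))
    have hu2 : u ∉ X₁ ∩ X₁' := fun h ↦ huH (Or.inl (Or.inr h))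
    have hu3 : u ∉ X₂ ∩ X₂' := fun h ↦ huH (Or.inr h)
    by_cases huX : u ∈ X
    · have hcases : (u ∈ X₁ ∧ u ∈ X₂') ∨ (u ∈ X₂ ∧ u ∈ X₁') := by
        have h1 : u ∈ X₁ ∨ u ∈ X₂ := by
          have h' : u ∈ X₁ ∪ X₂ := by rw [hX₁₂]; exact huX
          exact h'
        have h2 : u ∈ X₁' ∨ u ∈ X₂' := by
          have h' : u ∈ X₁' ∪ X₂' := by rw [hX₁₂']; exact huX
          exact h'
        rcases h1 with h1 | h1 <;> rcases h2 with h2 | h2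
        · exact absurd ⟨h1, h2⟩ hu2
        · exact Or.inl ⟨h1, h2⟩
        · exact Or.inr ⟨h1, h2⟩
        · exact absurd ⟨h1, h2⟩ hu3
      have hucl : u ∉ N.closure G := by
        intro hucl
        rcases hcases with ⟨h1, h2⟩ | ⟨h1, h2⟩
        · have hne : u ∉ N.closure (insert z₁ (J ∩ J')) := by
            rw [hclA₁]
            rintro (h | h)
            · exact hJX u h.1 huX
            · exact (disjoint_left.mp hdisj' h.2) h2
          have hexch := mem_closure_insert hne (by rwa [hG] at hucl)
          have hsub : insert u (insert z₁ (J ∩ J')) ⊆ J ∪ X₁ :=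
            insert_subset (Or.inr h1) (insert_subset (Or.inr hz₁.1)
              (inter_subset_left.trans subset_union_left))
          have hz₂mem : z₂ ∈ J ∪ X₁ := by
            have h' := N.closure_subset_closure hsub hexch
            rwa [hH₁.1.closure] at h'
          rcases hz₂mem with h | h
          · exact hJX z₂ h hz₂X
          · exact (disjoint_left.mp hdisj h) hz₂.1
        · have hGcomm : G = insert z₁ (insert z₂ (J ∩ J')) := by
            rw [hG, insert_comm]
          have hne : u ∉ N.closure (insert z₂ (J ∩ J')) := by
            rw [hclA₂]
            rintro (h | h)
            · exact hJX u h.1 huX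
            · exact (disjoint_left.mp hdisj' h2) h.2
          have hexch := mem_closure_insert hne (by rwa [hGcomm] at hucl)
          have hsub : insert u (insert z₂ (J ∩ J')) ⊆ J ∪ X₂ :=
            insert_subset (Or.inr h1) (insert_subset (Or.inr hz₂.1)
              (inter_subset_left.trans subset_union_left))
          have hz₁mem : z₁ ∈ J ∪ X₂ := by
            have h' := N.closure_subset_closure hsub hexch
            rwa [hH₂.1.closure] at h'
          rcases hz₁mem with h | h
          · exact hJX z₁ h hz₁X
          · exact (disjoint_left.mp hdisj hz₁.1) h
      rw [insert_indep_iff]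
      exact ⟨hGind, fun _ ↦ ⟨huE, hucl⟩⟩
    · have huY : u ∈ Y := ⟨huE, huX⟩
      have hyy : u = y ∨ u = y' := by
        by_contra h
        push_neg at h
        apply hu1
        rw [hJeq, hJ'eq]
        exact ⟨⟨huY, h.1⟩, ⟨huY, h.2⟩⟩
      rcases hyy with rfl | rfl
      · have hrw : insert u G = insert z₂ (insert z₁ J') := by
          rw [hG, insert_comm u z₂, insert_comm u z₁, hinsJ]
        rw [hrw, insert_indep_iff]
        refine ⟨?_, fun _ ↦ ⟨hz₂E, fun hcl ↦ ?_⟩⟩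
        · exact (hbase z₁ hz₁X).indep.subset (by
            rw [union_singleton]; exact insert_subset_insert hJ'Y)
        · have hsub : insert z₁ J' ⊆ J' ∪ X₁' :=
            insert_subset (Or.inr hz₁.2) subset_union_left
          have h' := N.closure_subset_closure hsub hcl
          rw [hH₁'.1.closure] at h'
          rcases h' with h | h
          · exact hJ'X z₂ h hz₂X
          · exact (disjoint_left.mp hdisj' h) hz₂.2
      · have hrw : insert u G = insert z₂ (insert z₁ J) := by
          rw [hG, insert_comm u z₂, insert_comm u z₁, hinsJ']
        rw [hrw, insert_indep_iff]
        refine ⟨?_, fun _ ↦ ⟨hz₂E, fun hcl ↦ ?_⟩⟩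
        · exact (hbase z₁ hz₁X).indep.subset (by
            rw [union_singleton]; exact insert_subset_insert hJY)
        · have hsub : insert z₁ J ⊆ J ∪ X₁ :=
            insert_subset (Or.inr hz₁.1) subset_union_left
          have h' := N.closure_subset_closure hsub hcl
          rw [hH₁.1.closure] at h'
          rcases h' with h | h
          · exact hJX z₂ h hz₂X
          · exact (disjoint_left.mp hdisj h) hz₂.1
  -- closure of G is H
  have hclG : N.closure G = H := by
    apply subset_antisymm
    · intro u hu
      by_contra huH
      have huE : u ∈ N.E := N.closure_subset_ground G hu
      have hind := hkey u huE huH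
      have huG : u ∉ G := fun h ↦ huH (hGH h)
      exact ((hGind.notMem_closure_iff_of_notMem huG huE).mpr hind) hu
    · rw [hHdef]
      refine union_subset (union_subset ?_ ?_) ?_
      · exact fun a ha ↦ N.subset_closure G hGE (Or.inr (Or.inr ha))
      · have h1 : N.closure (insert z₁ (J ∩ J')) ⊆ N.closure G :=
          N.closure_subset_closure (by rw [hG]; exact subset_insert _ _)
        rw [hclA₁] at h1
        exact subset_union_right.trans h1
      · have h2 : N.closure (insert z₂ (J ∩ J')) ⊆ N.closure G :=
          N.closure_subset_closure (by
            rw [hG]; exact insert_subset_insert (subset_insert _ _))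
        rw [hclA₂] at h2
        exact subset_union_right.trans h2
  -- conclude
  have hyJ : y ∉ J := by rw [hJeq]; exact fun h ↦ h.2 rfl
  have hyH : y ∉ H := by
    rw [hHdef]
    rintro ((h | h) | h)
    · exact hyJ h.1
    · exact hyX (hX₁X h.1)
    · exact hyX (hX₂X h.1)
  refine isHyperplane_of_forall_aux N ?_ ?_ ?_
  · rw [← hclG, closure_closure]
  · exact fun h ↦ hyH (h ▸ hyE)
  · intro e he
    have hind := hkey e he.1 he.2
    have hecard : (insert e G).ncard = k - 1 := by
      rw [ncard_insert_of_notMem (fun h ↦ he.2 (hGH h)) (hEfin.subset hGE), hGcard]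
      omega
    rw [← hclG, closure_insert_closure_eq_closure_insert]
    exact (hbc _ hind hecard).closure_eq


end CCIAux

end Matroid

open Matroid

open Matroid.CCIAux in
theorem stmt_9 {α : Type*} (N : Matroid α) (k : ℕ) (hk : 4 ≤ k)
    (hE : N.E.ncard = 2 * k - 2) (hr : N.rank = k - 1) (hr' : N✶.rank = k - 1)
    (X : Set α) (hXcard : X.ncard = k)
    (hXc : N.IsCircuit' X) (hXcc : N.IsCocircuit' X)
    (J X₁ X₂ : Set α) (hJ : J ⊆ N.E \ X) (hJcard : J.ncard = k - 3)
    (hX₁₂ : X₁ ∪ X₂ = X) (hdisj : Disjoint X₁ X₂)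
    (hH₁ : N.IsHyperplane (J ∪ X₁)) (hH₂ : N.IsHyperplane (J ∪ X₂))
    (J' X₁' X₂' : Set α) (hJ' : J' ⊆ N.E \ X) (hJ'card : J'.ncard = k - 3)
    (hX₁₂' : X₁' ∪ X₂' = X) (hdisj' : Disjoint X₁' X₂')
    (hH₁' : N.IsHyperplane (J' ∪ X₁')) (hH₂' : N.IsHyperplane (J' ∪ X₂'))
    (hJJ' : J ≠ J')
    (Z₁ Z₂ : Set α)
    (hZ₁ : Z₁ ∈ {Z : Set α | Z.Nonempty ∧ ∃ A ∈ ({X₁, X₂} : Set (Set α)),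
            ∃ B ∈ ({X₁', X₂'} : Set (Set α)), Z = A ∩ B})
    (hZ₂ : Z₂ ∈ {Z : Set α | Z.Nonempty ∧ ∃ A ∈ ({X₁, X₂} : Set (Set α)),
            ∃ B ∈ ({X₁', X₂'} : Set (Set α)), Z = A ∩ B})
    (hZne : Z₁ ≠ Z₂)
    (h1 : ¬ Z₁ ∪ Z₂ ⊆ X₁) (h2 : ¬ Z₁ ∪ Z₂ ⊆ X₂)
    (h3 : ¬ Z₁ ∪ Z₂ ⊆ X₁') (h4 : ¬ Z₁ ∪ Z₂ ⊆ X₂') :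
    N.IsHyperplane ((J ∩ J') ∪ Z₁ ∪ Z₂) := by
  obtain ⟨hne₁, A₁, hA₁, B₁, hB₁, hZ₁eq⟩ := hZ₁
  obtain ⟨hne₂, A₂, hA₂, B₂, hB₂, hZ₂eq⟩ := hZ₂
  simp only [Set.mem_insert_iff, Set.mem_singleton_iff] at hA₁ hB₁ hA₂ hB₂
  subst hZ₁eq
  subst hZ₂eq
  have key₁ := cci_key N k hk hE hr' X hXcard hXc hXcc
    J X₁ X₂ hJ hJcard hX₁₂ hdisj hH₁ hH₂
    J' X₁' X₂' hJ' hJ'card hX₁₂' hdisj' hH₁' hH₂' hJJ'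
  have key₂ := cci_key N k hk hE hr' X hXcard hXc hXcc
    J X₁ X₂ hJ hJcard hX₁₂ hdisj hH₁ hH₂
    J' X₂' X₁' hJ' hJ'card (by rw [Set.union_comm]; exact hX₁₂') hdisj'.symm hH₂' hH₁' hJJ'
  have key₃ := cci_key N k hk hE hr' X hXcard hXc hXcc
    J X₂ X₁ hJ hJcard (by rw [Set.union_comm]; exact hX₁₂) hdisj.symm hH₂ hH₁
    J' X₁' X₂' hJ' hJ'card hX₁₂' hdisj' hH₁' hH₂' hJJ'
  have key₄ := cci_key N k hk hE hr' X hXcard hXc hXcc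
    J X₂ X₁ hJ hJcard (by rw [Set.union_comm]; exact hX₁₂) hdisj.symm hH₂ hH₁
    J' X₂' X₁' hJ' hJ'card (by rw [Set.union_comm]; exact hX₁₂') hdisj'.symm hH₂' hH₁' hJJ'
  rcases hA₁ with hA₁ | hA₁ <;> rcases hA₂ with hA₂ | hA₂ <;>
    rcases hB₁ with hB₁ | hB₁ <;> rcases hB₂ with hB₂ | hB₂
  · refine absurd ?_ h1
    rw [hA₁, hA₂]
    exact Set.union_subset Set.inter_subset_left Set.inter_subset_left
  · refine absurd ?_ h1
    rw [hA₁, hA₂]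
    exact Set.union_subset Set.inter_subset_left Set.inter_subset_left
  · refine absurd ?_ h1
    rw [hA₁, hA₂]
    exact Set.union_subset Set.inter_subset_left Set.inter_subset_left
  · refine absurd ?_ h1
    rw [hA₁, hA₂]
    exact Set.union_subset Set.inter_subset_left Set.inter_subset_left
  · -- A₁ = X₁, A₂ = X₂
    refine absurd ?_ h3
    rw [hB₁, hB₂]
    exact Set.union_subset Set.inter_subset_right Set.inter_subset_right
  · -- A₁ = X₁, B₁ = X₁', A₂ = X₂, B₂ = X₂'
    rw [hA₁, hB₁] at hne₁
    rw [hA₂, hB₂] at hne₂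
    rw [hA₁, hB₁, hA₂, hB₂]
    exact key₁ hne₁ hne₂
  · -- A₁ = X₁, B₁ = X₂', A₂ = X₂, B₂ = X₁'
    rw [hA₁, hB₁] at hne₁
    rw [hA₂, hB₂] at hne₂
    rw [hA₁, hB₁, hA₂, hB₂]
    exact key₂ hne₁ hne₂
  · refine absurd ?_ h4
    rw [hB₁, hB₂]
    exact Set.union_subset Set.inter_subset_right Set.inter_subset_right
  · -- A₁ = X₂, A₂ = X₁, B₁ = X₁', B₂ = X₁'
    refine absurd ?_ h3
    rw [hB₁, hB₂]
    exact Set.union_subset Set.inter_subset_right Set.inter_subset_right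
  · -- A₁ = X₂, B₁ = X₁', A₂ = X₁, B₂ = X₂'
    rw [hA₁, hB₁] at hne₁
    rw [hA₂, hB₂] at hne₂
    rw [hA₁, hB₁, hA₂, hB₂]
    exact key₃ hne₁ hne₂
  · -- A₁ = X₂, B₁ = X₂', A₂ = X₁, B₂ = X₁'
    rw [hA₁, hB₁] at hne₁
    rw [hA₂, hB₂] at hne₂
    rw [hA₁, hB₁, hA₂, hB₂]
    exact key₄ hne₁ hne₂
  · refine absurd ?_ h4
    rw [hB₁, hB₂]
    exact Set.union_subset Set.inter_subset_right Set.inter_subset_right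
  · refine absurd ?_ h2
    rw [hA₁, hA₂]
    exact Set.union_subset Set.inter_subset_left Set.inter_subset_left
  · refine absurd ?_ h2
    rw [hA₁, hA₂]
    exact Set.union_subset Set.inter_subset_left Set.inter_subset_left
  · refine absurd ?_ h2
    rw [hA₁, hA₂]
    exact Set.union_subset Set.inter_subset_left Set.inter_subset_left
  · refine absurd ?_ h2
    rw [hA₁, hA₂]
    exact Set.union_subset Set.inter_subset_left Set.inter_subset_left
end

section
/- Let N be a CCI-envelope of a CCI X of size k ≥ 4 with Y = E(N)\X. Suppose (J; X₁, X₂) is a hyperplane-partition with |X₁| ∈ {2, 3}, and (J*; X₁*, X₂*) is a cohyperplane-partition with J* ≠ J. Then X₁ ⊆ X₁* or X₁ ⊆ X₂*. -/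
open Set

open Matroid

namespace MyAux

/-- The closure of any set is a flat. -/
lemma closure_flat' (M : Matroid α) (X : Set α) : M.IsFlat (M.closure X) := by
  have hne : Nonempty {F : Set α // M.IsFlat F ∧ X ∩ M.E ⊆ F} :=
    ⟨⟨M.E, M.ground_isFlat, inter_subset_right⟩⟩
  have h := Matroid.IsFlat.iInter (M := M)
    (Fs := fun F : {F : Set α // M.IsFlat F ∧ X ∩ M.E ⊆ F} ↦ F.1) (fun F ↦ F.2.1)
  convert h using 1
  rw [Matroid.closure_def, sInter_eq_iInter]
  rfl

/-- A circuit element lies in the closure of the rest of the circuit. -/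
lemma circuit_mem_closure_diff {M : Matroid α} {C : Set α} (hC : M.IsCircuit' C)
    {e : α} (he : e ∈ C) : e ∈ M.closure (C \ {e}) := by
  have hI : M.Indep (C \ {e}) := hC.2.2 _ (sdiff_singleton_ssubset.mpr he)
  rw [hI.mem_closure_iff]
  left
  rw [insert_diff_singleton, insert_eq_of_mem he]
  exact ⟨hC.2.1, hC.1⟩

/-- The complement of a hyperplane is a cocircuit. -/
lemma hyperplane_compl_cocircuit {M : Matroid α} {H : Set α} (hH : M.IsHyperplane H) :
    M.IsCocircuit' (M.E \ H) := by
  obtain ⟨hF, hne, hmax⟩ := hH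
  have hHE := hF.subset_ground
  refine ⟨by rw [Matroid.dual_ground]; exact diff_subset, ?_, ?_⟩
  · show ¬ M.Coindep (M.E \ H)
    rw [Matroid.coindep_iff_compl_spanning diff_subset, diff_diff_cancel_left hHE,
      Matroid.spanning_iff_closure_eq hHE, hF.closure]
    exact hne
  · intro D hD
    obtain ⟨e, heK, heD⟩ := exists_of_ssubset hD
    have heE : e ∈ M.E := heK.1
    have heH : e ∉ H := heK.2
    have hDE : D ⊆ M.E := hD.subset.trans diff_subset
    have hflat := closure_flat' M (insert e H)
    have hins : insert e H ⊆ M.E := insert_subset heE hHE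
    have hsub : H ⊂ M.closure (insert e H) := by
      refine ssubset_of_subset_of_ne
        ((subset_insert _ _).trans (M.subset_closure _ hins)) fun hEq ↦ ?_
      have : e ∈ M.closure (insert e H) := M.subset_closure _ hins (mem_insert e H)
      rw [← hEq] at this
      exact heH this
    have hclE := hmax _ hflat hsub
    show M.Coindep D
    rw [Matroid.coindep_iff_compl_spanning hDE, Matroid.spanning_iff_closure_eq diff_subset]
    refine subset_antisymm (M.closure_subset_ground _) ?_
    have hsub2 : insert e H ⊆ M.E \ D :=
      insert_subset ⟨heE, heD⟩ fun x hx ↦ ⟨hHE hx, fun hxD ↦ (hD.subset hxD).2 hx⟩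
    calc M.E = M.closure (insert e H) := hclE.symm
      _ ⊆ M.closure (M.E \ D) := M.closure_subset_closure hsub2

/-- A circuit and a cocircuit never meet in exactly one element. -/
lemma circuit_inter_cocircuit_ne_singleton {M : Matroid α} {C K : Set α}
    (hC : M.IsCircuit' C) (hK : M.IsCocircuit' K) (e : α) (h : C ∩ K = {e}) : False := by
  have he : e ∈ C ∩ K := by rw [h]; exact rfl
  have heC : e ∈ C := he.1
  have heK : e ∈ K := he.2
  have hKE : K ⊆ M.E := by have := hK.1; rwa [Matroid.dual_ground] at this
  have hCE := hC.1
  have h1 : e ∈ M.closure (M.E \ K) := by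
    refine M.closure_subset_closure (show C \ {e} ⊆ M.E \ K from ?_)
      (circuit_mem_closure_diff hC heC)
    intro x hx
    refine ⟨hCE hx.1, fun hxK ↦ hx.2 ?_⟩
    have : x ∈ C ∩ K := ⟨hx.1, hxK⟩
    rw [h] at this
    exact this
  have h2 : M.Coindep (K \ {e}) := hK.2.2 _ (sdiff_singleton_ssubset.mpr heK)
  rw [Matroid.coindep_iff_compl_spanning (diff_subset.trans hKE),
    Matroid.spanning_iff_closure_eq diff_subset] at h2
  have h3 : M.E \ (K \ {e}) = insert e (M.E \ K) := by
    have heE : e ∈ M.E := hKE heK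
    ext x
    simp only [mem_diff, mem_singleton_iff, mem_insert_iff, not_and, not_not]
    constructor
    · rintro ⟨hxE, hx⟩
      by_cases hxe : x = e
      · exact Or.inl hxe
      · exact Or.inr ⟨hxE, fun hxK ↦ hxe (hx hxK)⟩
    · rintro (rfl | ⟨hxE, hxK⟩)
      · exact ⟨heE, fun _ ↦ rfl⟩
      · exact ⟨hxE, fun hxK' ↦ absurd hxK' hxK⟩
  rw [h3, Matroid.closure_insert_eq_of_mem_closure h1] at h2
  have h4 : ¬ M.Coindep K := hK.2.1
  rw [Matroid.coindep_iff_compl_spanning hKE,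
    Matroid.spanning_iff_closure_eq diff_subset] at h4
  exact h4 h2

/-- The complement of a cohyperplane is a circuit. -/
lemma cohyperplane_compl_circuit {M : Matroid α} {H : Set α} (hH : M✶.IsHyperplane H) :
    M.IsCircuit' (M.E \ H) := by
  have h := hyperplane_compl_cocircuit hH
  unfold Matroid.IsCocircuit' at h
  rwa [Matroid.dual_dual, Matroid.dual_ground] at h

/-- Complement computation for a hyperplane-partition piece. -/
lemma compl_part {E X J A B : Set α} {y : α} (hXE : X ⊆ E) (hJ : J ⊆ E \ X)
    (hAB : A ∪ B = X) (hd : Disjoint A B) (hy : (E \ X) \ J = {y}) :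
    E \ (J ∪ A) = B ∪ {y} := by
  have hyE : y ∈ (E \ X) \ J := by rw [hy]; exact rfl
  ext z
  simp only [mem_diff, mem_union, mem_singleton_iff, not_or]
  constructor
  · rintro ⟨hzE, hzJ, hzA⟩
    by_cases hzX : z ∈ X
    · rw [← hAB] at hzX
      rcases hzX with h' | h'
      · exact absurd h' hzA
      · exact Or.inl h'
    · have : z ∈ (E \ X) \ J := ⟨⟨hzE, hzX⟩, hzJ⟩
      rw [hy] at this
      exact Or.inr this
  · rintro (hzB | rfl)
    · have hzX : z ∈ X := by rw [← hAB]; exact Or.inr hzB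
      refine ⟨hXE hzX, fun hzJ ↦ (hJ hzJ).2 hzX, fun hzA ↦ ?_⟩
      exact hd.ne_of_mem hzA hzB rfl
    · exact ⟨hyE.1.1, hyE.2, fun hzA ↦ hyE.1.2 (by rw [← hAB]; exact Or.inl hzA)⟩

end MyAux

open MyAux

theorem stmt_12 {α : Type*} (N : Matroid α) (k : ℕ) (hk : 4 ≤ k)
    (hE : N.E.ncard = 2 * k - 2) (hr : N.rank = k - 1) (hr' : N✶.rank = k - 1)
    (X : Set α) (hXcard : X.ncard = k)
    (hXc : N.IsCircuit' X) (hXcc : N.IsCocircuit' X)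
    (J X₁ X₂ : Set α) (hJ : J ⊆ N.E \ X) (hJcard : J.ncard = k - 3)
    (hX₁₂ : X₁ ∪ X₂ = X) (hdisj : Disjoint X₁ X₂)
    (hH₁ : N.IsHyperplane (J ∪ X₁)) (hH₂ : N.IsHyperplane (J ∪ X₂))
    (hX₁card : X₁.ncard = 2 ∨ X₁.ncard = 3)
    (Jst X₁st X₂st : Set α) (hJst : Jst ⊆ N.E \ X) (hJstcard : Jst.ncard = k - 3)
    (hX₁₂st : X₁st ∪ X₂st = X) (hdisjst : Disjoint X₁st X₂st)
    (hH₁st : N✶.IsHyperplane (Jst ∪ X₁st)) (hH₂st : N✶.IsHyperplane (Jst ∪ X₂st))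
    (hne : Jst ≠ J) :
    X₁ ⊆ X₁st ∨ X₁ ⊆ X₂st := by
  have hXE : X ⊆ N.E := hXc.1
  -- finiteness
  have hEfin : N.E.Finite := by
    by_contra hfin
    have : N.E.Infinite := hfin
    rw [this.ncard] at hE
    omega
  have hXfin : X.Finite := hEfin.subset hXE
  have hYfin : (N.E \ X).Finite := hEfin.diff
  -- cardinality of Y = E \ X
  have hYcard : (N.E \ X).ncard = k - 2 := by
    rw [Set.ncard_diff hXE hXfin, hE, hXcard]
    omega
  -- the unique elements y, yst
  have hyJ : ((N.E \ X) \ J).ncard = 1 := by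
    rw [Set.ncard_diff hJ (hYfin.subset hJ), hYcard, hJcard]
    omega
  have hyJst : ((N.E \ X) \ Jst).ncard = 1 := by
    rw [Set.ncard_diff hJst (hYfin.subset hJst), hYcard, hJstcard]
    omega
  obtain ⟨y, hy⟩ := Set.ncard_eq_one.mp hyJ
  obtain ⟨yst, hyst⟩ := Set.ncard_eq_one.mp hyJst
  have hyY : y ∈ (N.E \ X) \ J := by rw [hy]; exact rfl
  have hystY : yst ∈ (N.E \ X) \ Jst := by rw [hyst]; exact rfl
  have hyne : y ≠ yst := by
    intro h
    apply hne
    rw [← Set.diff_diff_cancel_left hJst, hyst, ← h, ← hy, Set.diff_diff_cancel_left hJ]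
  -- cocircuit X₁ ∪ {y}
  have hK : N.IsCocircuit' (X₁ ∪ {y}) := by
    have h := hyperplane_compl_cocircuit hH₂
    rwa [compl_part hXE hJ (union_comm X₂ X₁ ▸ hX₁₂) hdisj.symm hy] at h
  -- circuits X₂st ∪ {yst} and X₁st ∪ {yst}
  have hC₁ : N.IsCircuit' (X₂st ∪ {yst}) := by
    have h := cohyperplane_compl_circuit hH₁st
    rwa [compl_part hXE hJst hX₁₂st hdisjst hyst] at h
  have hC₂ : N.IsCircuit' (X₁st ∪ {yst}) := by
    have h := cohyperplane_compl_circuit hH₂st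
    rwa [compl_part hXE hJst (union_comm X₂st X₁st ▸ hX₁₂st) hdisjst.symm hyst] at h
  -- subsets of X
  have hX₁X : X₁ ⊆ X := hX₁₂ ▸ subset_union_left
  have hX₁stX : X₁st ⊆ X := hX₁₂st ▸ subset_union_left
  have hX₂stX : X₂st ⊆ X := hX₁₂st ▸ subset_union_right
  have hyX : y ∉ X := hyY.1.2
  have hystX : yst ∉ X := hystY.1.2
  -- intersections with the cocircuit
  have hint : ∀ A : Set α, A ⊆ X → (A ∪ {yst}) ∩ (X₁ ∪ {y}) = X₁ ∩ A := by
    intro A hA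
    ext z
    simp only [mem_inter_iff, mem_union, mem_singleton_iff]
    constructor
    · rintro ⟨hA' | rfl, hB⟩
      · rcases hB with hB | rfl
        · exact ⟨hB, hA'⟩
        · exact absurd (hA hA') hyX
      · rcases hB with hB | h
        · exact absurd (hX₁X hB) hystX
        · exact absurd h.symm hyne
    · rintro ⟨h1, h2⟩
      exact ⟨Or.inl h2, Or.inl h1⟩
  have h1 : (X₁ ∩ X₁st).ncard ≠ 1 := by
    intro hcard
    obtain ⟨e, he⟩ := Set.ncard_eq_one.mp hcard
    exact circuit_inter_cocircuit_ne_singleton hC₂ hK e (by rw [hint X₁st hX₁stX, he])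
  have h2 : (X₁ ∩ X₂st).ncard ≠ 1 := by
    intro hcard
    obtain ⟨e, he⟩ := Set.ncard_eq_one.mp hcard
    exact circuit_inter_cocircuit_ne_singleton hC₁ hK e (by rw [hint X₂st hX₂stX, he])
  -- counting
  have hpart : (X₁ ∩ X₁st) ∪ (X₁ ∩ X₂st) = X₁ := by
    rw [← inter_union_distrib_left, hX₁₂st, inter_eq_left.mpr hX₁X]
  have hdisj' : Disjoint (X₁ ∩ X₁st) (X₁ ∩ X₂st) :=
    hdisjst.mono inter_subset_right inter_subset_right
  have hfin1 : (X₁ ∩ X₁st).Finite := (hXfin.subset hX₁X).subset inter_subset_left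
  have hfin2 : (X₁ ∩ X₂st).Finite := (hXfin.subset hX₁X).subset inter_subset_left
  have hsum : (X₁ ∩ X₁st).ncard + (X₁ ∩ X₂st).ncard = X₁.ncard := by
    rw [← Set.ncard_union_eq hdisj' hfin1 hfin2, hpart]
  have hzero : (X₁ ∩ X₁st).ncard = 0 ∨ (X₁ ∩ X₂st).ncard = 0 := by
    rcases hX₁card with h | h <;> omega
  rcases hzero with h0 | h0
  · right
    have hempty : X₁ ∩ X₁st = ∅ := (Set.ncard_eq_zero hfin1).mp h0
    intro z hz
    have : z ∈ X₁st ∪ X₂st := hX₁₂st ▸ hX₁X hz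
    rcases this with h' | h'
    · exact absurd (show z ∈ X₁ ∩ X₁st from ⟨hz, h'⟩) (by rw [hempty]; exact notMem_empty z)
    · exact h'
  · left
    have hempty : X₁ ∩ X₂st = ∅ := (Set.ncard_eq_zero hfin2).mp h0
    intro z hz
    have : z ∈ X₁st ∪ X₂st := hX₁₂st ▸ hX₁X hz
    rcases this with h' | h'
    · exact h'
    · exact absurd (show z ∈ X₁ ∩ X₂st from ⟨hz, h'⟩) (by rw [hempty]; exact notMem_empty z)
end
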